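/- arXiv:0910.2060 — 6 statements merged into one kernel-verified Lean document; each statement's English description precedes it below -/
import Mathlib

section
/- Let a > 2 and L > 0. Suppose f : [0,∞) → ℝ is continuous with f(ρ) ≥ 1/4 for all ρ ≥ 0 and |f(ρ) − 1| ≤ L e^{−aρ} for all ρ ≥ 0. Suppose y : [0,∞) → ℝ is differentiable, satisfies the Riccati equation y′(ρ) + y(ρ)² = f(ρ) for all ρ ≥ 0, and y(0) > 0. Then there exists a positive constant C, depending only on L and y(0), such that |y(ρ) − 1| ≤ C e^{−2ρ} for all ρ ≥ 0. -/
open Set Filter Real Topology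

/-- If `u' ≥ 0` on `[0,∞)` then `u 0 ≤ u t` for `t ≥ 0`. -/
lemma riccati_aux_mono (u u' : ℝ → ℝ)
    (hu : ∀ t, 0 ≤ t → HasDerivWithinAt u (u' t) (Set.Ici 0) t)
    (hu' : ∀ t, 0 < t → 0 ≤ u' t) : ∀ t, 0 ≤ t → u 0 ≤ u t := by
  intro t ht
  have hm : MonotoneOn u (Set.Ici 0) := by
    apply monotoneOn_of_hasDerivWithinAt_nonneg (convex_Ici 0)
      (fun s hs => (hu s hs).continuousWithinAt)
      (fun s hs => (hu s (interior_subset hs)).mono interior_subset)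
    intro s hs
    rw [interior_Ici] at hs
    exact hu' s hs
  exact hm (Set.self_mem_Ici) ht ht

/-- Case `a > 2` of the ODE comparison lemma (Lemma 2.1): a solution of the
Riccati equation `y' + y² = f` with `f` exponentially close to `1` of order
`a > 2` and `y(0) > 0` satisfies `|y - 1| ≤ C e^{-2ρ}`. -/
theorem riccati_decay_a_gt_two (a L : ℝ) (ha : 2 < a) (hL : 0 < L)
    (f y : ℝ → ℝ)
    (hf_cont : ContinuousOn f (Set.Ici 0))
    (hf_lb : ∀ ρ, 0 ≤ ρ → (1 : ℝ) / 4 ≤ f ρ)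
    (hf_close : ∀ ρ, 0 ≤ ρ → |f ρ - 1| ≤ L * Real.exp (-a * ρ))
    (hy : ∀ ρ, 0 ≤ ρ → HasDerivWithinAt y (f ρ - (y ρ) ^ 2) (Set.Ici 0) ρ)
    (hy0 : 0 < y 0) :
    ∃ C : ℝ, 0 < C ∧ ∀ ρ, 0 ≤ ρ → |y ρ - 1| ≤ C * Real.exp (-2 * ρ) := by
  set α : ℝ := min (y 0) (1/2) / 2 with hα_def
  set β : ℝ := max (y 0) (Real.sqrt (1 + L)) + 1 with hβ_def
  have hα0 : 0 < α := by
    have : 0 < min (y 0) (1/2) := lt_min hy0 (by norm_num)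
    positivity
  have hα4 : α ≤ 1/4 := by
    have : min (y 0) (1/2 : ℝ) ≤ 1/2 := min_le_right _ _
    rw [hα_def]; linarith
  have hαy0 : α < y 0 := by
    have h1 : min (y 0) (1/2 : ℝ) ≤ y 0 := min_le_left _ _
    have : 0 < min (y 0) (1/2 : ℝ) := lt_min hy0 (by norm_num)
    rw [hα_def]; linarith
  have hy0β : y 0 < β := by
    have := le_max_left (y 0) (Real.sqrt (1 + L))
    rw [hβ_def]; linarith
  have hβpos : 0 < β := lt_trans hy0 hy0β
  have hβ2 : 1 + L < β ^ 2 := by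
    have h1 : Real.sqrt (1 + L) ≤ max (y 0) (Real.sqrt (1 + L)) := le_max_right _ _
    have h2 : Real.sqrt (1 + L) < β := by rw [hβ_def]; linarith
    have h3 : Real.sqrt (1 + L) ^ 2 = 1 + L := Real.sq_sqrt (by linarith)
    calc 1 + L = Real.sqrt (1 + L) ^ 2 := h3.symm
      _ < β ^ 2 := by
          apply pow_lt_pow_left₀ h2 (Real.sqrt_nonneg _) (by norm_num)
  have hycont : ContinuousOn y (Set.Ici 0) := fun ρ hρ => (hy ρ hρ).continuousWithinAt
  have hf_ub : ∀ ρ, 0 ≤ ρ → f ρ ≤ 1 + L := by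
    intro ρ hρ
    have h1 := (abs_le.mp (hf_close ρ hρ)).2
    have h2 : Real.exp (-a * ρ) ≤ 1 := by
      apply Real.exp_le_one_iff.mpr
      nlinarith
    nlinarith
  -- invariance of [α, β]
  have hinv : ∀ ρ, 0 ≤ ρ → α ≤ y ρ ∧ y ρ ≤ β := by
    by_contra hcon
    push_neg at hcon
    obtain ⟨ρ1, hρ1, hbad⟩ := hcon
    have hbad' : y ρ1 ≤ α ∨ β ≤ y ρ1 := by
      rcases le_or_gt α (y ρ1) with h | h
      · exact Or.inr (hbad h).le
      · exact Or.inl h.le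
    set S : Set ℝ := Set.Icc 0 ρ1 ∩ y ⁻¹' (Set.Iic α ∪ Set.Ici β) with hS_def
    have hS1 : ρ1 ∈ S := by
      refine ⟨⟨hρ1, le_refl _⟩, ?_⟩
      rcases hbad' with h | h
      · exact Or.inl h
      · exact Or.inr h
    have hSc : IsClosed S :=
      (hycont.mono (Set.Icc_subset_Ici_self)).preimage_isClosed_of_isClosed
        isClosed_Icc (isClosed_Iic.union isClosed_Ici)
    have hbdd : BddBelow S := ⟨0, fun t ht => ht.1.1⟩
    set T := sInf S with hT_def
    have hTS : T ∈ S := hSc.csInf_mem ⟨ρ1, hS1⟩ hbdd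
    have hT0 : 0 ≤ T := hTS.1.1
    have hTρ1 : T ≤ ρ1 := hTS.1.2
    have hT0' : 0 < T := by
      rcases hT0.lt_or_eq with h | h
      · exact h
      · exfalso
        have h0S : (0:ℝ) ∈ S := h ▸ hTS
        rcases h0S.2 with h' | h'
        · exact absurd h' (not_le.mpr hαy0)
        · exact absurd h' (not_le.mpr hy0β)
    have hbefore : ∀ t, 0 ≤ t → t < T → α < y t ∧ y t < β := by
      intro t ht htT
      by_contra hc
      push_neg at hc
      have htS : t ∈ S := by
        refine ⟨⟨ht, le_trans htT.le hTρ1⟩, ?_⟩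
        rcases lt_or_ge α (y t) with h | h
        · exact Or.inr (hc h)
        · exact Or.inl h
      exact absurd (csInf_le hbdd htS) (not_le.mpr htT)
    have hne : (𝓝[Set.Ioo 0 T] T).NeBot := by
      rw [← mem_closure_iff_nhdsWithin_neBot, closure_Ioo hT0'.ne]
      exact ⟨hT0'.le, le_refl _⟩
    have hsub : Set.Ioo 0 T ⊆ Set.Ici 0 := fun t ht => ht.1.le
    have hmono : 𝓝[Set.Ioo 0 T] T ≤ 𝓝[Set.Ici 0] T := nhdsWithin_mono _ hsub
    have hyT_cont : Filter.Tendsto y (𝓝[Set.Ioo 0 T] T) (𝓝 (y T)) :=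
      (hycont T hT0).mono_left hmono
    have hyT_ge : α ≤ y T := by
      apply ge_of_tendsto hyT_cont
      filter_upwards [eventually_mem_nhdsWithin] with t ht
      exact (hbefore t ht.1.le ht.2).1.le
    have hyT_le : y T ≤ β := by
      apply le_of_tendsto hyT_cont
      filter_upwards [eventually_mem_nhdsWithin] with t ht
      exact (hbefore t ht.1.le ht.2).2.le
    have hd := hy T hT0
    rw [hasDerivWithinAt_iff_tendsto_slope] at hd
    have hsub2 : Set.Ioo 0 T ⊆ Set.Ici 0 \ {T} := fun t ht => ⟨ht.1.le, ne_of_lt ht.2⟩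
    have hd' : Filter.Tendsto (slope y T) (𝓝[Set.Ioo 0 T] T) (𝓝 (f T - y T ^ 2)) :=
      hd.mono_left (nhdsWithin_mono _ hsub2)
    rcases hTS.2 with hcase | hcase
    · -- y T = α
      have hyTα : y T = α := le_antisymm hcase hyT_ge
      have hle : f T - y T ^ 2 ≤ 0 := by
        apply le_of_tendsto hd'
        filter_upwards [eventually_mem_nhdsWithin] with t ht
        rw [slope_def_field]
        have h1 : 0 < y t - y T := by
          rw [hyTα]; exact sub_pos.mpr (hbefore t ht.1.le ht.2).1
        have h2 : t - T < 0 := sub_neg.mpr ht.2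
        exact (div_neg_of_pos_of_neg h1 h2).le
      have : 0 < f T - y T ^ 2 := by
        have := hf_lb T hT0
        rw [hyTα]
        nlinarith
      linarith
    · -- y T = β
      have hyTβ : y T = β := le_antisymm hyT_le hcase
      have hge : 0 ≤ f T - y T ^ 2 := by
        apply ge_of_tendsto hd'
        filter_upwards [eventually_mem_nhdsWithin] with t ht
        rw [slope_def_field]
        have h1 : y t - y T < 0 := by
          rw [hyTβ]; exact sub_neg.mpr (hbefore t ht.1.le ht.2).2
        have h2 : t - T < 0 := sub_neg.mpr ht.2
        exact (div_pos_of_neg_of_neg h1 h2).le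
      have : f T - y T ^ 2 < 0 := by
        have := hf_ub T hT0
        rw [hyTβ]
        nlinarith
      linarith
  -- the transformed quantity w = (y-1)/(y+1)
  have hy1pos : ∀ ρ, 0 ≤ ρ → 1 < y ρ + 1 := by
    intro ρ hρ
    have := (hinv ρ hρ).1
    linarith
  have hne0 : ∀ ρ, 0 ≤ ρ → y ρ + 1 ≠ 0 := by
    intro ρ hρ
    have := hy1pos ρ hρ
    linarith
  have hExp : ∀ (c ρ : ℝ), HasDerivAt (fun t => Real.exp (c * t)) (c * Real.exp (c * ρ)) ρ := by
    intro c ρ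
    have h := (Real.hasDerivAt_exp (c * ρ)).comp ρ ((hasDerivAt_id ρ).const_mul c)
    exact h.congr_deriv (by ring)
  have hwd : ∀ ρ, 0 ≤ ρ → HasDerivWithinAt (fun t => 1 - 2 / (y t + 1))
      (2 * (f ρ - (y ρ) ^ 2) / (y ρ + 1) ^ 2) (Set.Ici 0) ρ := by
    intro ρ hρ
    have h1 : HasDerivWithinAt (fun t => y t + 1) (f ρ - (y ρ) ^ 2) (Set.Ici 0) ρ :=
      (hy ρ hρ).add_const 1
    have h2 := (h1.inv (hne0 ρ hρ)).const_mul 2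
    have h3 := h2.const_sub 1
    have hfun : (fun t => 1 - 2 * (y t + 1)⁻¹) = fun t => 1 - 2 / (y t + 1) := by
      funext t; rw [div_eq_mul_inv]
    simp only [Pi.inv_apply] at h3
    rw [hfun] at h3
    refine h3.congr_deriv ?_
    ring
  have hgd : ∀ ρ, 0 ≤ ρ → HasDerivWithinAt (fun t => Real.exp (2 * t) * (1 - 2 / (y t + 1)))
      (2 * (f ρ - 1) / (y ρ + 1) ^ 2 * Real.exp (2 * ρ)) (Set.Ici 0) ρ := by
    intro ρ hρ
    have h := ((hExp 2 ρ).hasDerivWithinAt).mul (hwd ρ hρ)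
    refine h.congr_deriv ?_
    have hne' := hne0 ρ hρ
    field_simp
    ring
  -- derivative bound
  have hgd_bound : ∀ ρ, 0 < ρ → |2 * (f ρ - 1) / (y ρ + 1) ^ 2 * Real.exp (2 * ρ)| ≤
      2 * L * Real.exp ((2 - a) * ρ) := by
    intro ρ hρ
    have hρ' := hρ.le
    have h1 : (1:ℝ) ≤ (y ρ + 1) ^ 2 := by nlinarith [hy1pos ρ hρ']
    have h2 := hf_close ρ hρ'
    have hpos : (0:ℝ) < (y ρ + 1) ^ 2 := by linarith
    have h3 : |2 * (f ρ - 1) / (y ρ + 1) ^ 2 * Real.exp (2 * ρ)| =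
        2 * |f ρ - 1| / (y ρ + 1) ^ 2 * Real.exp (2 * ρ) := by
      rw [abs_mul, abs_div, abs_mul]
      rw [abs_of_pos hpos, abs_of_nonneg (Real.exp_pos _).le, abs_of_nonneg (by norm_num : (0:ℝ) ≤ 2)]
    rw [h3]
    have h4 : 2 * |f ρ - 1| / (y ρ + 1) ^ 2 ≤ 2 * (L * Real.exp (-a * ρ)) := by
      calc 2 * |f ρ - 1| / (y ρ + 1) ^ 2 ≤ 2 * |f ρ - 1| := by
            apply div_le_self (by positivity) h1
        _ ≤ 2 * (L * Real.exp (-a * ρ)) := by linarith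
    have h5 : Real.exp ((2 - a) * ρ) = Real.exp (-a * ρ) * Real.exp (2 * ρ) := by
      rw [← Real.exp_add]; ring_nf
    calc 2 * |f ρ - 1| / (y ρ + 1) ^ 2 * Real.exp (2 * ρ)
        ≤ 2 * (L * Real.exp (-a * ρ)) * Real.exp (2 * ρ) := by
          apply mul_le_mul_of_nonneg_right h4 (Real.exp_pos _).le
      _ = 2 * L * Real.exp ((2 - a) * ρ) := by rw [h5]; ring
  -- comparison function φ with φ' = 2 L exp((2-a)ρ)
  set M : ℝ := 2 * L / (a - 2) with hM_def
  have hMpos : 0 < M := by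
    rw [hM_def]; exact div_pos (by linarith) (by linarith)
  have ha2 : a - 2 ≠ 0 := by linarith
  have hφd : ∀ ρ, HasDerivAt (fun t => M * (- Real.exp ((2 - a) * t)))
      (2 * L * Real.exp ((2 - a) * ρ)) ρ := by
    intro ρ
    have h := ((hExp (2 - a) ρ).neg).const_mul M
    refine h.congr_deriv ?_
    rw [hM_def]
    field_simp
    ring
  -- |g ρ - g 0| ≤ M (1 - exp((2-a)ρ)) ≤ M
  have hgbound : ∀ ρ, 0 ≤ ρ → |Real.exp (2 * ρ) * (1 - 2 / (y ρ + 1)) -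
      (1 - 2 / (y 0 + 1))| ≤ M := by
    intro ρ hρ
    set g : ℝ → ℝ := fun t => Real.exp (2 * t) * (1 - 2 / (y t + 1)) with hg_def
    set φ : ℝ → ℝ := fun t => M * (- Real.exp ((2 - a) * t)) with hφ_def
    have key1 : g ρ - g 0 ≤ φ ρ - φ 0 := by
      have := riccati_aux_mono (fun t => φ t - g t)
        (fun t => 2 * L * Real.exp ((2 - a) * t) - 2 * (f t - 1) / (y t + 1) ^ 2 * Real.exp (2 * t))
        (fun t ht => ((hφd t).hasDerivWithinAt).sub (hgd t ht))
        (fun t ht => by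
          have := hgd_bound t ht
          have h := (abs_le.mp this).2
          linarith) ρ hρ
      linarith
    have key2 : -(φ ρ - φ 0) ≤ g ρ - g 0 := by
      have := riccati_aux_mono (fun t => φ t + g t)
        (fun t => 2 * L * Real.exp ((2 - a) * t) + 2 * (f t - 1) / (y t + 1) ^ 2 * Real.exp (2 * t))
        (fun t ht => ((hφd t).hasDerivWithinAt).add (hgd t ht))
        (fun t ht => by
          have := hgd_bound t ht
          have h := (abs_le.mp this).1
          linarith) ρ hρ
      linarith
    have hφ_range : φ ρ - φ 0 ≤ M := by
      rw [hφ_def]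
      simp only
      have h1 : Real.exp ((2 - a) * (0:ℝ)) = 1 := by norm_num
      have h2 : 0 < Real.exp ((2 - a) * ρ) := Real.exp_pos _
      rw [h1]
      nlinarith
    have hg0 : g 0 = 1 - 2 / (y 0 + 1) := by
      rw [hg_def]; norm_num
    have hgρ : g ρ = Real.exp (2 * ρ) * (1 - 2 / (y ρ + 1)) := rfl
    rw [abs_le]
    constructor
    · rw [← hg0]; linarith [hgρ]
    · rw [← hg0]; linarith [hgρ]
  -- conclude
  refine ⟨(β + 1) * (|1 - 2 / (y 0 + 1)| + M), by positivity, ?_⟩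
  intro ρ hρ
  have h1 := hgbound ρ hρ
  have h2 : |Real.exp (2 * ρ) * (1 - 2 / (y ρ + 1))| ≤ |1 - 2 / (y 0 + 1)| + M := by
    have := abs_sub_abs_le_abs_sub (Real.exp (2 * ρ) * (1 - 2 / (y ρ + 1))) (1 - 2 / (y 0 + 1))
    linarith
  have hne' := hne0 ρ hρ
  have hypos : 0 < y ρ + 1 := lt_trans one_pos (hy1pos ρ hρ)
  have hw_eq : y ρ - 1 = (1 - 2 / (y ρ + 1)) * (y ρ + 1) := by
    field_simp
    ring
  have h3 : |y ρ - 1| = |1 - 2 / (y ρ + 1)| * (y ρ + 1) := by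
    rw [hw_eq, abs_mul, abs_of_pos hypos]
  have h4 : |1 - 2 / (y ρ + 1)| ≤ (|1 - 2 / (y 0 + 1)| + M) * Real.exp (-2 * ρ) := by
    rw [abs_mul, abs_of_nonneg (Real.exp_pos _).le] at h2
    have hE : Real.exp (-2 * ρ) = (Real.exp (2 * ρ))⁻¹ := by
      rw [← Real.exp_neg]; ring_nf
    rw [hE, ← div_eq_mul_inv, le_div_iff₀ (Real.exp_pos _)]
    rw [mul_comm]
    linarith [h2]
  have hyβ1 : y ρ + 1 ≤ β + 1 := by linarith [(hinv ρ hρ).2]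
  calc |y ρ - 1| = |1 - 2 / (y ρ + 1)| * (y ρ + 1) := h3
    _ ≤ ((|1 - 2 / (y 0 + 1)| + M) * Real.exp (-2 * ρ)) * (β + 1) := by
        apply mul_le_mul h4 hyβ1 hypos.le (by positivity)
    _ = (β + 1) * (|1 - 2 / (y 0 + 1)| + M) * Real.exp (-2 * ρ) := by ring
end

section
/- Let a = 2 and L > 0. Suppose f : [0,∞) → ℝ is continuous with f(ρ) ≥ 1/4 for all ρ ≥ 0 and |f(ρ) − 1| ≤ L e^{−2ρ} for all ρ ≥ 0. Suppose y : [0,∞) → ℝ is differentiable, satisfies the Riccati equation y′(ρ) + y(ρ)² = f(ρ) for all ρ ≥ 0, and y(0) > 0. Then there exists a positive constant C, depending only on L and y(0), such that |y(ρ) − 1| ≤ C (1 + ρ) e^{−2ρ} for all ρ ≥ 0. -/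
open Set intervalIntegral Real Filter MeasureTheory

open Set intervalIntegral Real Filter

/-- Antiderivative of `exp (c*t)`. -/
lemma riccati_aux_integral_exp_mul (c : ℝ) (hc : c ≠ 0) (s ρ : ℝ) :
    ∫ t in s..ρ, Real.exp (c * t) = (Real.exp (c * ρ) - Real.exp (c * s)) / c := by
  have hderiv : ∀ x ∈ uIcc s ρ, HasDerivAt (fun t => Real.exp (c * t) / c)
      (Real.exp (c * x)) x := by
    intro x _
    have h1 : HasDerivAt (fun t : ℝ => c * t) c x := by
      simpa using (hasDerivAt_id x).const_mul c
    have h2 := h1.exp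
    have h3 := h2.div_const c
    simpa [mul_div_assoc, mul_div_cancel_right₀ _ hc] using h3
  have hint : IntervalIntegrable (fun t => Real.exp (c * t)) MeasureTheory.volume s ρ :=
    (Real.continuous_exp.comp (continuous_const.mul continuous_id)).intervalIntegrable _ _
  rw [intervalIntegral.integral_eq_sub_of_hasDerivAt hderiv hint]
  ring

/-- Barrier lemma: if `y' > 0` whenever `y = m`, and `y 0 > m`, then `y ≥ m` on `[0,∞)`. -/
lemma riccati_aux_stays_above (y g : ℝ → ℝ)
    (hy : ∀ ρ, 0 ≤ ρ → HasDerivWithinAt y (g ρ) (Set.Ici 0) ρ)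
    (m : ℝ) (h0 : m < y 0)
    (hpush : ∀ ρ, 0 ≤ ρ → y ρ = m → 0 < g ρ) :
    ∀ ρ, 0 ≤ ρ → m ≤ y ρ := by
  have hyc : ContinuousOn y (Set.Ici 0) := fun x hx => (hy x hx).continuousWithinAt
  by_contra hcon
  push_neg at hcon
  obtain ⟨b, hb0, hyb⟩ := hcon
  have hycb : ContinuousOn y (Set.Icc 0 b) := hyc.mono (Icc_subset_Ici_self)
  set S : Set ℝ := Set.Icc 0 b ∩ y ⁻¹' {m} with hSdef
  have hne : S.Nonempty := by
    have h := intermediate_value_Icc' hb0 hycb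
    have hm : m ∈ Set.Icc (y b) (y 0) := ⟨hyb.le, h0.le⟩
    obtain ⟨c, hc, hyc'⟩ := h hm
    exact ⟨c, hc, hyc'⟩
  have hclosed : IsClosed S := hycb.preimage_isClosed_of_isClosed isClosed_Icc isClosed_singleton
  have hcomp : IsCompact S := isCompact_Icc.of_isClosed_subset hclosed inter_subset_left
  set t := sSup S with htdef
  have htS : t ∈ S := hcomp.sSup_mem hne
  obtain ⟨⟨ht0, htb⟩, hytm⟩ := htS
  have hytm : y t = m := hytm
  have htb' : t < b := by
    rcases lt_or_eq_of_le htb with h | h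
    · exact h
    · exfalso; rw [h] at hytm; linarith
  have hlt : ∀ s ∈ Set.Ioc t b, y s < m := by
    intro s hs
    by_contra h
    push_neg at h
    rcases eq_or_lt_of_le h with heq | hlt'
    · have hsS : s ∈ S := ⟨⟨le_trans ht0 hs.1.le, hs.2⟩, heq.symm⟩
      exact absurd (le_csSup hcomp.bddAbove hsS) (not_le.2 hs.1)
    · have hs0 : (0:ℝ) ≤ s := le_trans ht0 hs.1.le
      have hycs : ContinuousOn y (Set.Icc s b) :=
        hyc.mono (fun x hx => le_trans hs0 hx.1)
      have h := intermediate_value_Icc' hs.2 hycs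
      obtain ⟨c, hc, hyc'⟩ := h ⟨hyb.le, hlt'.le⟩
      have hcS : c ∈ S := ⟨⟨le_trans hs0 hc.1, hc.2⟩, hyc'⟩
      have : c ≤ t := le_csSup hcomp.bddAbove hcS
      exact absurd (lt_of_lt_of_le hs.1 hc.1) (not_lt.2 this)
  have hgt : 0 < g t := hpush t ht0 hytm
  have hd : HasDerivWithinAt y (g t) (Set.Ioi t) t :=
    (hy t ht0).mono (fun x hx => le_trans ht0 (le_of_lt hx))
  rw [hasDerivWithinAt_iff_tendsto_slope] at hd
  have hsd : Set.Ioi t \ {t} = Set.Ioi t := by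
    apply Set.diff_singleton_eq_self; simp
  rw [hsd] at hd
  have hev : ∀ᶠ x in nhdsWithin t (Set.Ioi t), 0 < slope y t x :=
    hd.eventually (eventually_gt_nhds hgt)
  have hmem : Set.Ioc t b ∈ nhdsWithin t (Set.Ioi t) := by
    rw [← Set.Ioi_inter_Iic]
    exact inter_mem_nhdsWithin _ (Iic_mem_nhds htb')
  obtain ⟨x, hx1, hx2⟩ := (hev.and (eventually_of_mem hmem (fun x hx => hx))).exists
  have hxt : t < x := hx2.1
  rw [slope_def_field] at hx1
  have hnum : 0 < y x - y t := by
    have := mul_pos hx1 (sub_pos.2 hxt)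
    rwa [div_mul_cancel₀ _ (by linarith : x - t ≠ 0)] at this
  have := hlt x hx2
  rw [hytm] at hnum
  linarith


lemma riccati_aux_key (L α K : ℝ) (hK : 0 ≤ K) (hL : 0 ≤ L) (f y : ℝ → ℝ)
    (hfc : Continuous f) (hyc : Continuous y)
    (hy : ∀ ρ, 0 < ρ → HasDerivAt y (f ρ - y ρ ^ 2) ρ)
    (hfb : ∀ ρ, 0 ≤ ρ → |f ρ - 1| ≤ L * Real.exp (-2 * ρ))
    (hΦ : ∀ s ρ, 0 ≤ s → s ≤ ρ → α * (ρ - s) - K ≤ ∫ t in s..ρ, (y t + 1)) :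
    ∀ ρ, 0 ≤ ρ → |y ρ - 1| ≤
      Real.exp K * Real.exp (-α * ρ) *
        (|y 0 - 1| + L * ∫ s in (0:ℝ)..ρ, Real.exp ((α - 2) * s)) := by
  have hyc1 : Continuous (fun t => y t + 1) := hyc.add continuous_const
  set Φ : ℝ → ℝ := fun ρ => ∫ t in (0:ℝ)..ρ, (y t + 1) with hΦdef
  have hΦd : ∀ x : ℝ, HasDerivAt Φ (y x + 1) x := by
    intro x
    exact intervalIntegral.integral_hasDerivAt_right
      (hyc1.intervalIntegrable _ _)
      (hyc1.stronglyMeasurableAtFilter _ _)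
      hyc1.continuousAt
  have hΦc : Continuous Φ := by
    have : Differentiable ℝ Φ := fun x => (hΦd x).differentiableAt
    exact this.continuous
  set u : ℝ → ℝ := fun ρ => Real.exp (Φ ρ) * (y ρ - 1) with hudef
  have huc : Continuous u := (hΦc.rexp).mul (hyc.sub continuous_const)
  have hud : ∀ x, 0 < x → HasDerivAt u (Real.exp (Φ x) * (f x - 1)) x := by
    intro x hx
    have h1 : HasDerivAt (fun ρ => Real.exp (Φ ρ)) (Real.exp (Φ x) * (y x + 1)) x :=
      (hΦd x).exp
    have h2 : HasDerivAt (fun ρ => y ρ - 1) (f x - y x ^ 2) x := (hy x hx).sub_const 1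
    have h3 := h1.mul h2
    exact h3.congr_deriv (by ring)
  -- FTC
  have hFTC : ∀ ρ, 0 ≤ ρ → u ρ = (y 0 - 1) + ∫ s in (0:ℝ)..ρ, Real.exp (Φ s) * (f s - 1) := by
    intro ρ hρ
    have hint : IntervalIntegrable (fun s => Real.exp (Φ s) * (f s - 1)) volume 0 ρ :=
      ((hΦc.rexp).mul (hfc.sub continuous_const)).intervalIntegrable _ _
    have := intervalIntegral.integral_eq_sub_of_hasDeriv_right_of_le hρ
      huc.continuousOn
      (fun x hx => (hud x hx.1).hasDerivWithinAt) hint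
    have hu0 : u 0 = y 0 - 1 := by
      simp [hudef, hΦdef, intervalIntegral.integral_same]
    rw [this, hu0]; ring
  intro ρ hρ
  -- basic integrabilities
  have hintg : IntervalIntegrable (fun s => Real.exp (Φ s) * (L * Real.exp (-2 * s))) volume 0 ρ :=
    ((hΦc.rexp).mul (continuous_const.mul
      ((continuous_const.mul continuous_id).rexp))).intervalIntegrable _ _
  have hintf : IntervalIntegrable (fun s => Real.exp (Φ s) * (f s - 1)) volume 0 ρ :=
    ((hΦc.rexp).mul (hfc.sub continuous_const)).intervalIntegrable _ _
  -- |u ρ| bound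
  have habs : |u ρ| ≤ |y 0 - 1| + ∫ s in (0:ℝ)..ρ, Real.exp (Φ s) * (L * Real.exp (-2 * s)) := by
    rw [hFTC ρ hρ]
    refine le_trans (abs_add_le _ _) (add_le_add le_rfl ?_)
    refine le_trans (intervalIntegral.abs_integral_le_integral_abs hρ) ?_
    apply intervalIntegral.integral_mono_on hρ
      (hintf.abs) hintg
    intro x hx
    rw [abs_mul, abs_of_pos (Real.exp_pos _)]
    exact mul_le_mul_of_nonneg_left (hfb x hx.1) (Real.exp_pos _).le
  -- Φ lower bounds
  have hΦρ : α * ρ - K ≤ Φ ρ := by simpa using hΦ 0 ρ le_rfl hρ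
  have hΦdiff : ∀ s, 0 ≤ s → s ≤ ρ → α * (ρ - s) - K ≤ Φ ρ - Φ s := by
    intro s hs hsρ
    have h := hΦ s ρ hs hsρ
    have heq : Φ ρ - Φ s = ∫ t in s..ρ, (y t + 1) :=
      intervalIntegral.integral_interval_sub_left (hyc1.intervalIntegrable _ _)
        (hyc1.intervalIntegrable _ _)
    linarith [heq ▸ h]
  -- main estimate
  have hw : y ρ - 1 = Real.exp (-Φ ρ) * u ρ := by
    simp only [hudef]
    rw [← mul_assoc, ← Real.exp_add]
    simp
  rw [hw, abs_mul, abs_of_pos (Real.exp_pos _)]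
  have step1 : Real.exp (-Φ ρ) * |u ρ| ≤
      Real.exp (-Φ ρ) * (|y 0 - 1| + ∫ s in (0:ℝ)..ρ, Real.exp (Φ s) * (L * Real.exp (-2 * s))) :=
    mul_le_mul_of_nonneg_left habs (Real.exp_pos _).le
  refine le_trans step1 ?_
  rw [mul_add]
  have term1 : Real.exp (-Φ ρ) * |y 0 - 1| ≤ Real.exp K * Real.exp (-α * ρ) * |y 0 - 1| := by
    apply mul_le_mul_of_nonneg_right _ (abs_nonneg _)
    rw [← Real.exp_add]
    apply Real.exp_le_exp.2
    linarith
  have term2 : Real.exp (-Φ ρ) * ∫ s in (0:ℝ)..ρ, Real.exp (Φ s) * (L * Real.exp (-2 * s)) ≤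
      Real.exp K * Real.exp (-α * ρ) * (L * ∫ s in (0:ℝ)..ρ, Real.exp ((α - 2) * s)) := by
    rw [← intervalIntegral.integral_const_mul]
    have hrhs : Real.exp K * Real.exp (-α * ρ) * (L * ∫ s in (0:ℝ)..ρ, Real.exp ((α - 2) * s))
        = ∫ s in (0:ℝ)..ρ, Real.exp K * Real.exp (-α * ρ) * (L * Real.exp ((α - 2) * s)) := by
      rw [intervalIntegral.integral_const_mul, intervalIntegral.integral_const_mul]
    rw [hrhs]
    apply intervalIntegral.integral_mono_on hρ
    · exact (continuous_const.mul ((hΦc.rexp).mul (continuous_const.mul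
        ((continuous_const.mul continuous_id).rexp)))).intervalIntegrable _ _
    · exact (continuous_const.mul (continuous_const.mul
        ((continuous_const.mul continuous_id).rexp))).intervalIntegrable _ _
    · intro x hx
      have h1 : Real.exp (-Φ ρ) * (Real.exp (Φ x) * (L * Real.exp (-2 * x)))
          = L * Real.exp (-Φ ρ + Φ x + -2 * x) := by
        rw [Real.exp_add, Real.exp_add]; ring
      have h2 : Real.exp K * Real.exp (-α * ρ) * (L * Real.exp ((α - 2) * x))
          = L * Real.exp (K + -α * ρ + (α - 2) * x) := by
        rw [Real.exp_add, Real.exp_add]; ring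
      rw [h1, h2]
      apply mul_le_mul_of_nonneg_left _ hL
      apply Real.exp_le_exp.2
      have h := hΦdiff x hx.1 hx.2
      nlinarith [h]
  calc Real.exp (-Φ ρ) * |y 0 - 1|
      + Real.exp (-Φ ρ) * ∫ s in (0:ℝ)..ρ, Real.exp (Φ s) * (L * Real.exp (-2 * s))
      ≤ Real.exp K * Real.exp (-α * ρ) * |y 0 - 1|
        + Real.exp K * Real.exp (-α * ρ) * (L * ∫ s in (0:ℝ)..ρ, Real.exp ((α - 2) * s)) :=
        add_le_add term1 term2
    _ = _ := by ring


/-- Case `a = 2` of the ODE comparison lemma (Lemma 2.1): a solution of the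
Riccati equation `y' + y² = f` with `|f - 1| ≤ L e^{-2ρ}` and `y(0) > 0`
satisfies `|y - 1| ≤ C (1 + ρ) e^{-2ρ}`. -/
theorem riccati_decay_a_eq_two (L : ℝ) (hL : 0 < L)
    (f y : ℝ → ℝ)
    (hf_cont : ContinuousOn f (Set.Ici 0))
    (hf_lb : ∀ ρ, 0 ≤ ρ → (1 : ℝ) / 4 ≤ f ρ)
    (hf_close : ∀ ρ, 0 ≤ ρ → |f ρ - 1| ≤ L * Real.exp (-2 * ρ))
    (hy : ∀ ρ, 0 ≤ ρ → HasDerivWithinAt y (f ρ - (y ρ) ^ 2) (Set.Ici 0) ρ)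
    (hy0 : 0 < y 0) :
    ∃ C : ℝ, 0 < C ∧ ∀ ρ, 0 ≤ ρ → |y ρ - 1| ≤ C * (1 + ρ) * Real.exp (-2 * ρ) := by
  have hyci : ContinuousOn y (Set.Ici 0) := fun x hx => (hy x hx).continuousWithinAt
  set m : ℝ := min (y 0) (1/2) / 2 with hmdef
  have hmin1 : min (y 0) (1/2) ≤ y 0 := min_le_left _ _
  have hmin2 : min (y 0) (1/2) ≤ 1/2 := min_le_right _ _
  have hminpos : 0 < min (y 0) (1/2) := lt_min hy0 (by norm_num)
  have hm0 : 0 < m := by rw [hmdef]; positivity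
  have hm14 : m ≤ 1/4 := by rw [hmdef]; linarith
  have hmy : m < y 0 := by rw [hmdef]; linarith
  have hlow : ∀ ρ, 0 ≤ ρ → m ≤ y ρ := by
    apply riccati_aux_stays_above y (fun ρ => f ρ - y ρ ^ 2) hy m hmy
    intro ρ hρ hyρ
    have h1 := hf_lb ρ hρ
    rw [hyρ]
    nlinarith
  set M : ℝ := max (y 0) (1 + L) + 1 with hMdef
  have hMy : y 0 < M := by
    have := le_max_left (y 0) (1 + L); rw [hMdef]; linarith
  have hML : 2 + L ≤ M := by
    have := le_max_right (y 0) (1 + L); rw [hMdef]; linarith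
  have hfub : ∀ ρ, 0 ≤ ρ → f ρ ≤ 1 + L := by
    intro ρ hρ
    have h := abs_le.1 (hf_close ρ hρ)
    have he : Real.exp (-2 * ρ) ≤ 1 := Real.exp_le_one_iff.2 (by linarith)
    nlinarith [h.2]
  have hup : ∀ ρ, 0 ≤ ρ → y ρ ≤ M := by
    intro ρ hρ
    have h := riccati_aux_stays_above (fun ρ => -y ρ) (fun ρ => -(f ρ - y ρ ^ 2))
      (fun ρ hρ => (hy ρ hρ).neg) (-M) (by show -M < -y 0; linarith) ?_ ρ hρ
    · have h' : -M ≤ -y ρ := h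
      linarith
    · intro s hs hys
      have hyM : y s = M := by
        have h'' : -y s = -M := hys
        linarith
      have hfs := hfub s hs
      have hM2 : 2 ≤ M := by linarith
      show 0 < -(f s - y s ^ 2)
      rw [hyM]
      nlinarith
  -- extended functions
  set Y : ℝ → ℝ := fun ρ => y (max ρ 0) with hYdef
  set F : ℝ → ℝ := fun ρ => f (max ρ 0) with hFdef
  have hYc : Continuous Y :=
    hyci.comp_continuous (continuous_id.max continuous_const) (fun x => Set.mem_Ici.2 (le_max_right _ _))
  have hFc : Continuous F :=
    hf_cont.comp_continuous (continuous_id.max continuous_const) (fun x => Set.mem_Ici.2 (le_max_right _ _))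
  have hYeq : ∀ ρ, 0 ≤ ρ → Y ρ = y ρ := by
    intro ρ hρ; rw [hYdef]; simp [max_eq_left hρ]
  have hFeq : ∀ ρ, 0 ≤ ρ → F ρ = f ρ := by
    intro ρ hρ; rw [hFdef]; simp [max_eq_left hρ]
  have hYd : ∀ ρ, 0 < ρ → HasDerivAt Y (F ρ - Y ρ ^ 2) ρ := by
    intro ρ hρ
    have hd : HasDerivAt y (f ρ - y ρ ^ 2) ρ := (hy ρ hρ.le).hasDerivAt (Ici_mem_nhds hρ)
    have heq : Y =ᶠ[nhds ρ] y := by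
      filter_upwards [Ioi_mem_nhds hρ] with x hx
      exact hYeq x (le_of_lt hx)
    have hd' := hd.congr_of_eventuallyEq heq
    rw [hFeq ρ hρ.le, hYeq ρ hρ.le]
    exact hd'
  have hFb : ∀ ρ, 0 ≤ ρ → |F ρ - 1| ≤ L * Real.exp (-2 * ρ) := by
    intro ρ hρ; rw [hFeq ρ hρ]; exact hf_close ρ hρ
  have hYlow : ∀ ρ, 0 ≤ ρ → m ≤ Y ρ := by
    intro ρ hρ; rw [hYeq ρ hρ]; exact hlow ρ hρ
  -- first application of the key lemma: α = 1 + m, K = 0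
  have hΦ1 : ∀ s ρ, 0 ≤ s → s ≤ ρ → (1 + m) * (ρ - s) - 0 ≤ ∫ t in s..ρ, (Y t + 1) := by
    intro s ρ hs hsρ
    have hconst : (∫ t in s..ρ, (1 + m : ℝ)) = (ρ - s) * (1 + m) := by
      rw [intervalIntegral.integral_const]; simp [smul_eq_mul]
    have hmono : (∫ t in s..ρ, (1 + m : ℝ)) ≤ ∫ t in s..ρ, (Y t + 1) :=
      intervalIntegral.integral_mono_on hsρ
        (intervalIntegrable_const) ((hYc.add continuous_const).intervalIntegrable _ _)
        (fun x hx => by have := hYlow x (le_trans hs hx.1); linarith)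
    rw [hconst] at hmono
    linarith
  have h1 := riccati_aux_key L (1 + m) 0 le_rfl hL.le F Y hFc hYc hYd hFb hΦ1
  set C₁ : ℝ := |y 0 - 1| + 2 * L with hC1def
  have hC1pos : 0 < C₁ := by rw [hC1def]; positivity
  have h1' : ∀ ρ, 0 ≤ ρ → |Y ρ - 1| ≤ C₁ * Real.exp (-(1 + m) * ρ) := by
    intro ρ hρ
    have h := h1 ρ hρ
    rw [hYeq 0 le_rfl] at h
    have hcne : (1 + m - 2 : ℝ) ≠ 0 := by intro hc; linarith
    have hint : (∫ s in (0:ℝ)..ρ, Real.exp ((1 + m - 2) * s)) ≤ 2 := by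
      rw [riccati_aux_integral_exp_mul (1 + m - 2) hcne 0 ρ, mul_zero, Real.exp_zero]
      rw [div_le_iff_of_neg (by linarith : (1 + m - 2 : ℝ) < 0)]
      nlinarith [Real.exp_pos ((1 + m - 2) * ρ)]
    have hb : |y 0 - 1| + L * ∫ s in (0:ℝ)..ρ, Real.exp ((1 + m - 2) * s) ≤ C₁ := by
      have := mul_le_mul_of_nonneg_left hint hL.le
      rw [hC1def]; linarith
    calc |Y ρ - 1| ≤ Real.exp 0 * Real.exp (-(1 + m) * ρ) *
            (|y 0 - 1| + L * ∫ s in (0:ℝ)..ρ, Real.exp ((1 + m - 2) * s)) := h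
      _ ≤ Real.exp 0 * Real.exp (-(1 + m) * ρ) * C₁ := by
          apply mul_le_mul_of_nonneg_left hb (by positivity)
      _ = C₁ * Real.exp (-(1 + m) * ρ) := by rw [Real.exp_zero]; ring
  -- second application: α = 2, K = C₁
  have hΦ2 : ∀ s ρ, 0 ≤ s → s ≤ ρ → 2 * (ρ - s) - C₁ ≤ ∫ t in s..ρ, (Y t + 1) := by
    intro s ρ hs hsρ
    have hsplit : (∫ t in s..ρ, (Y t + 1)) = (∫ t in s..ρ, (Y t - 1)) + (ρ - s) * 2 := by
      have hfe : (fun t => Y t + 1) = fun t => (Y t - 1) + 2 := by funext t; ring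
      rw [hfe, intervalIntegral.integral_add (f := fun t => Y t - 1) (g := fun _ => (2 : ℝ))
        ((hYc.sub continuous_const).intervalIntegrable _ _) intervalIntegrable_const,
        intervalIntegral.integral_const]
      simp [smul_eq_mul]
    have habs2 : |∫ t in s..ρ, (Y t - 1)| ≤ C₁ := by
      refine le_trans (intervalIntegral.abs_integral_le_integral_abs hsρ) ?_
      have hmono : (∫ t in s..ρ, |Y t - 1|) ≤ ∫ t in s..ρ, C₁ * Real.exp (-(1 + m) * t) :=
        intervalIntegral.integral_mono_on hsρ
          (((hYc.sub continuous_const).abs).intervalIntegrable _ _)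
          ((continuous_const.mul ((continuous_const.mul continuous_id).rexp)).intervalIntegrable _ _)
          (fun x hx => h1' x (le_trans hs hx.1))
      refine le_trans hmono ?_
      rw [intervalIntegral.integral_const_mul,
        riccati_aux_integral_exp_mul (-(1 + m)) (by linarith : (-(1 + m) : ℝ) ≠ 0) s ρ]
      have e1 : Real.exp (-(1 + m) * s) ≤ 1 := Real.exp_le_one_iff.2 (by nlinarith)
      have e2 : 0 < Real.exp (-(1 + m) * ρ) := Real.exp_pos _
      have hdivle : (Real.exp (-(1 + m) * ρ) - Real.exp (-(1 + m) * s)) / (-(1 + m)) ≤ 1 := by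
        rw [div_le_iff_of_neg (by linarith : (-(1 + m) : ℝ) < 0)]
        nlinarith
      nlinarith [hC1pos.le]
    have := (abs_le.1 habs2).1
    linarith
  have h2 := riccati_aux_key L 2 C₁ hC1pos.le hL.le F Y hFc hYc hYd hFb hΦ2
  refine ⟨Real.exp C₁ * (|y 0 - 1| + L), by positivity, ?_⟩
  intro ρ hρ
  have h := h2 ρ hρ
  rw [hYeq ρ hρ, hYeq 0 le_rfl] at h
  have hfe : (fun s : ℝ => Real.exp ((2 - 2) * s)) = fun _ : ℝ => (1 : ℝ) := by
    funext s; norm_num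
  rw [hfe, intervalIntegral.integral_const] at h
  simp only [smul_eq_mul, mul_one, sub_zero] at h
  -- h : |y ρ - 1| ≤ exp C₁ * exp (-2 * ρ) * (|y 0 - 1| + L * ρ)
  have key : |y 0 - 1| + L * ρ ≤ (|y 0 - 1| + L) * (1 + ρ) := by
    nlinarith [abs_nonneg (y 0 - 1)]
  calc |y ρ - 1| ≤ Real.exp C₁ * Real.exp (-2 * ρ) * (|y 0 - 1| + L * ρ) := h
    _ ≤ Real.exp C₁ * Real.exp (-2 * ρ) * ((|y 0 - 1| + L) * (1 + ρ)) := by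
        apply mul_le_mul_of_nonneg_left key (by positivity)
    _ = Real.exp C₁ * (|y 0 - 1| + L) * (1 + ρ) * Real.exp (-2 * ρ) := by ring
end

section
/- Let 0 < a < 2 and L > 0. Suppose f : [0,∞) → ℝ is continuous with f(ρ) ≥ 1/4 for all ρ ≥ 0 and |f(ρ) − 1| ≤ L e^{−aρ} for all ρ ≥ 0. Suppose y : [0,∞) → ℝ is differentiable, satisfies the Riccati equation y′(ρ) + y(ρ)² = f(ρ) for all ρ ≥ 0, and y(0) > 0. Then there exists a positive constant C, depending only on L and y(0), such that |y(ρ) − 1| ≤ C e^{−aρ} for all ρ ≥ 0. -/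
open Set MeasureTheory intervalIntegral

/-- Riccati-type comparison: if `(u' - v') + (u+v)(u-v) ≥ 0` on `[s,∞)` and `v s ≤ u s`,
then `v ≤ u` on `[s,∞)`. -/
lemma riccati_comparison (s : ℝ) (u v u' v' : ℝ → ℝ)
    (hu : ∀ t ∈ Ici s, HasDerivWithinAt u (u' t) (Ici s) t)
    (hv : ∀ t ∈ Ici s, HasDerivWithinAt v (v' t) (Ici s) t)
    (hineq : ∀ t ∈ Ici s, 0 ≤ (u' t - v' t) + (u t + v t) * (u t - v t))
    (h0 : v s ≤ u s) : ∀ t ∈ Ici s, v t ≤ u t := by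
  intro ρ hρ
  have hsρ : s ≤ ρ := hρ
  have hcu : ContinuousOn u (Ici s) := fun t ht => (hu t ht).continuousWithinAt
  have hcv : ContinuousOn v (Ici s) := fun t ht => (hv t ht).continuousWithinAt
  set p : ℝ → ℝ := fun t => u t + v t with hp
  have hcp : ContinuousOn p (Ici s) := hcu.add hcv
  set E : ℝ → ℝ := fun t => ∫ x in s..t, p x with hE
  set g : ℝ → ℝ := fun t => (u t - v t) * Real.exp (E t) with hg
  have hIcc : Icc s ρ ⊆ Ici s := Icc_subset_Ici_self
  have hpint : IntegrableOn p (uIcc s ρ) volume := by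
    rw [uIcc_of_le hsρ]
    exact (hcp.mono hIcc).integrableOn_Icc
  have hEc : ContinuousOn E (Icc s ρ) := by
    have := continuousOn_primitive_interval (a := s) (b := ρ) (f := p) (μ := volume) hpint
    rwa [uIcc_of_le hsρ] at this
  have hderiv : ∀ t ∈ Ioo s ρ, HasDerivAt g
      (((u' t - v' t) + p t * (u t - v t)) * Real.exp (E t)) t := by
    intro t ht
    have hts : s < t := ht.1
    have htmem : Ici s ∈ nhds t := Ici_mem_nhds hts
    have hut : HasDerivAt u (u' t) t := (hu t (le_of_lt hts)).hasDerivAt htmem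
    have hvt : HasDerivAt v (v' t) t := (hv t (le_of_lt hts)).hasDerivAt htmem
    have hEt : HasDerivAt E (p t) t := by
      refine integral_hasDerivAt_right ?_ ?_ ?_
      · refine (hcp.mono ?_).intervalIntegrable
        rw [uIcc_of_le (le_of_lt hts)]
        exact Icc_subset_Ici_self
      · exact (hcp.mono (Ioi_subset_Ici_self)).stronglyMeasurableAtFilter isOpen_Ioi t hts
      · exact (hcp.mono (Ioi_subset_Ici_self)).continuousAt (Ioi_mem_nhds hts)
    have hexp : HasDerivAt (fun t => Real.exp (E t)) (Real.exp (E t) * p t) t := hEt.exp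
    have := (hut.sub hvt).mul hexp
    convert this using 1
    · rfl
    · rfl
    · rfl
    simp only [Pi.sub_apply]
    ring
  have hmono : MonotoneOn g (Icc s ρ) := by
    refine monotoneOn_of_deriv_nonneg (convex_Icc s ρ) ?_ ?_ ?_
    · exact ((hcu.sub hcv).mono hIcc).mul (Real.continuous_exp.comp_continuousOn hEc)
    · intro t ht
      rw [interior_Icc] at ht
      exact ((hderiv t ht).differentiableAt).differentiableWithinAt
    · intro t ht
      rw [interior_Icc] at ht
      rw [(hderiv t ht).deriv]
      have h1 := hineq t (le_of_lt ht.1)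
      positivity
  have hgs : 0 ≤ g s := by
    simp only [hg, hE, integral_same, Real.exp_zero, mul_one]
    linarith
  have := hmono (left_mem_Icc.2 hsρ) (right_mem_Icc.2 hsρ) hsρ
  have hgρ : 0 ≤ g ρ := le_trans hgs this
  have hgρ' : 0 ≤ (u ρ - v ρ) * Real.exp (E ρ) := hgρ
  nlinarith [Real.exp_pos (E ρ), hgρ']

lemma exp_deriv_aux (a K t : ℝ) :
    HasDerivAt (fun t => K * Real.exp (-a * t)) (K * (Real.exp (-a * t) * (-a))) t := by
  have h1 : HasDerivAt (fun t : ℝ => -a * t) (-a) t := by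
    simpa using (hasDerivAt_id t).const_mul (-a)
  exact h1.exp.const_mul K

lemma exp_bound_aux (a c d : ℝ) (ha : 0 < a) (hc : 0 < c) (hd : 0 < d) (t : ℝ)
    (ht : Real.log (c / d) / a ≤ t) : c * Real.exp (-a * t) ≤ d := by
  have h1 : Real.log (c / d) ≤ a * t := by
    rw [div_le_iff₀ ha] at ht; linarith
  have h2 : Real.exp (-a * t) ≤ d / c := by
    have : -a * t ≤ Real.log (d / c) := by
      rw [Real.log_div hd.ne' hc.ne']
      rw [Real.log_div hc.ne' hd.ne'] at h1
      linarith
    calc Real.exp (-a * t) ≤ Real.exp (Real.log (d / c)) := Real.exp_le_exp.2 this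
      _ = d / c := Real.exp_log (by positivity)
  calc c * Real.exp (-a * t) ≤ c * (d / c) := mul_le_mul_of_nonneg_left h2 hc.le
    _ = d := by field_simp

set_option maxHeartbeats 1000000 in
/-- Case `0 < a < 2` of the ODE comparison lemma (Lemma 2.1): a solution of the
Riccati equation `y' + y² = f` with `|f - 1| ≤ L e^{-aρ}` and `y(0) > 0`
satisfies `|y - 1| ≤ C e^{-aρ}`. -/
theorem riccati_decay_a_lt_two (a L : ℝ) (ha0 : 0 < a) (ha2 : a < 2) (hL : 0 < L)
    (f y : ℝ → ℝ)
    (hf_cont : ContinuousOn f (Set.Ici 0))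
    (hf_lb : ∀ ρ, 0 ≤ ρ → (1 : ℝ) / 4 ≤ f ρ)
    (hf_close : ∀ ρ, 0 ≤ ρ → |f ρ - 1| ≤ L * Real.exp (-a * ρ))
    (hy : ∀ ρ, 0 ≤ ρ → HasDerivWithinAt y (f ρ - (y ρ) ^ 2) (Set.Ici 0) ρ)
    (hy0 : 0 < y 0) :
    ∃ C : ℝ, 0 < C ∧ ∀ ρ, 0 ≤ ρ → |y ρ - 1| ≤ C * Real.exp (-a * ρ) := by
  have hy' : ∀ ρ ∈ Ici (0:ℝ), HasDerivWithinAt y (f ρ - (y ρ) ^ 2) (Ici 0) ρ :=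
    fun ρ hρ => hy ρ hρ
  have hfu : ∀ t, 0 ≤ t → f t ≤ 1 + L * Real.exp (-a * t) := by
    intro t ht; have := (abs_le.1 (hf_close t ht)).2; linarith
  have hfl : ∀ t, 0 ≤ t → 1 - L * Real.exp (-a * t) ≤ f t := by
    intro t ht; have := (abs_le.1 (hf_close t ht)).1; linarith
  -- Stage A: lower bound m
  obtain ⟨m, hm⟩ : ∃ m : ℝ, m = min (y 0) (1/2) := ⟨_, rfl⟩
  have hm0 : 0 < m := hm ▸ lt_min hy0 (by norm_num)
  have hm2 : m ≤ 1/2 := hm ▸ min_le_right _ _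
  have hlow : ∀ t ∈ Ici (0:ℝ), m ≤ y t := by
    refine riccati_comparison 0 y (fun _ => m) (fun t => f t - y t ^ 2) (fun _ => 0)
      hy' (fun t _ => hasDerivWithinAt_const t _ m) ?_ (hm ▸ min_le_left _ _)
    intro t ht
    have h1 := hf_lb t ht
    nlinarith [mul_self_le_mul_self hm0.le hm2]
  -- Stage upper: y ≤ 1 + C₁ e^{-aρ}
  obtain ⟨C₁, hC₁⟩ : ∃ C₁ : ℝ, C₁ = max (y 0) (L / (2 - a)) := ⟨_, rfl⟩
  have hC₁0 : 0 < C₁ := hC₁ ▸ lt_max_of_lt_left hy0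
  have h2a : 0 < 2 - a := by linarith
  have hC₁L : L ≤ (2 - a) * C₁ := by
    have h := hC₁ ▸ le_max_right (y 0) (L / (2 - a))
    rw [div_le_iff₀ h2a] at h
    linear_combination h
  have hC₁y : y 0 ≤ C₁ := hC₁ ▸ le_max_left _ _
  have hupper : ∀ t ∈ Ici (0:ℝ), y t ≤ 1 + C₁ * Real.exp (-a * t) := by
    refine riccati_comparison 0 (fun t => 1 + C₁ * Real.exp (-a * t)) y
      (fun t => C₁ * (Real.exp (-a * t) * (-a)))
      (fun t => f t - y t ^ 2) (fun t _ => ((exp_deriv_aux a C₁ t).const_add 1).hasDerivWithinAt)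
      hy' ?_ ?_
    · intro t ht
      have he : 0 < Real.exp (-a * t) := Real.exp_pos _
      have h1 := hfu t ht
      have h2 : L * Real.exp (-a * t) ≤ (2 - a) * C₁ * Real.exp (-a * t) :=
        mul_le_mul_of_nonneg_right hC₁L he.le
      nlinarith [sq_nonneg (C₁ * Real.exp (-a * t))]
    · simp only [mul_zero, neg_zero, Real.exp_zero, mul_one]
      linarith
  -- Stage B: eventually y ≥ 1 - ε
  obtain ⟨ε, hε⟩ : ∃ ε : ℝ, ε = (2 - a) / 4 := ⟨_, rfl⟩
  have hε0 : 0 < ε := by rw [hε]; linarith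
  have hε2 : ε < 1/2 := by rw [hε]; linarith
  have hε1 : ε < 1 := by linarith
  obtain ⟨ρ₀, hρ₀⟩ : ∃ ρ₀ : ℝ, ρ₀ = max 0 (Real.log (L / ε) / a) := ⟨_, rfl⟩
  have hρ₀0 : (0:ℝ) ≤ ρ₀ := hρ₀ ▸ le_max_left _ _
  have hkey₀ : ∀ t, ρ₀ ≤ t → L * Real.exp (-a * t) ≤ ε := by
    intro t ht
    exact exp_bound_aux a L ε ha0 hL hε0 t (le_trans (hρ₀ ▸ le_max_right _ _) ht)
  obtain ⟨T, hT⟩ : ∃ T : ℝ, T = 1 / (ε * (1 - ε)) := ⟨_, rfl⟩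
  have hεε : 0 < ε * (1 - ε) := by nlinarith
  have hT0 : 0 < T := by rw [hT]; positivity
  have hstep : ∃ ρ₁ ∈ Icc ρ₀ (ρ₀ + T), 1 - ε ≤ y ρ₁ := by
    by_contra h
    push_neg at h
    have hsub : Icc ρ₀ (ρ₀ + T) ⊆ Ici (0:ℝ) := fun x hx => le_trans hρ₀0 hx.1
    have hgrow := Convex.mul_sub_le_image_sub_of_le_deriv (convex_Icc ρ₀ (ρ₀ + T))
      (f := y) (C := ε * (1 - ε)) ?_ ?_ ?_ ρ₀ (left_mem_Icc.2 (by linarith))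
      (ρ₀ + T) (right_mem_Icc.2 (by linarith)) (by linarith)
    · have h1 : ε * (1 - ε) * (ρ₀ + T - ρ₀) = 1 := by
        have h0 : ρ₀ + T - ρ₀ = T := by ring
        rw [h0, hT]
        field_simp
        exact div_self (by linarith)
      rw [h1] at hgrow
      have h2 := h (ρ₀ + T) (right_mem_Icc.2 (by linarith))
      have h3 := hlow ρ₀ hρ₀0
      linarith
    · exact fun t ht => ((hy t (hsub ht)).continuousWithinAt).mono hsub
    · intro t ht
      rw [interior_Icc] at ht
      have ht0 : 0 < t := lt_of_le_of_lt hρ₀0 ht.1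
      exact (((hy t ht0.le).hasDerivAt (Ici_mem_nhds ht0)).differentiableAt).differentiableWithinAt
    · intro t ht
      rw [interior_Icc] at ht
      have ht0 : 0 < t := lt_of_le_of_lt hρ₀0 ht.1
      rw [((hy t ht0.le).hasDerivAt (Ici_mem_nhds ht0)).deriv]
      have h1 := hfl t ht0.le
      have h2 := hkey₀ t ht.1.le
      have h3 := hlow t ht0.le
      have h4 := h t (Ioo_subset_Icc_self ht)
      nlinarith
  obtain ⟨ρ₁, hρ₁mem, hρ₁⟩ := hstep
  have hρ₁0 : (0:ℝ) ≤ ρ₁ := le_trans hρ₀0 hρ₁mem.1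
  -- persistence: y ≥ 1 - ε on Ici ρ₁
  have hpers : ∀ t ∈ Ici ρ₁, 1 - ε ≤ y t := by
    refine riccati_comparison ρ₁ y (fun _ => 1 - ε) (fun t => f t - y t ^ 2) (fun _ => 0)
      (fun t ht => (hy t (le_trans hρ₁0 ht)).mono (Ici_subset_Ici.2 hρ₁0))
      (fun t _ => hasDerivWithinAt_const t _ _) ?_ hρ₁
    intro t ht
    have ht0 : (0:ℝ) ≤ t := le_trans hρ₁0 ht
    have h1 := hfl t ht0
    have h2 := hkey₀ t (le_trans hρ₁mem.1 ht)
    nlinarith [mul_pos hε0 (show (0:ℝ) < 1 - ε by linarith)]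
  -- Stage C: lower barrier 1 - K e^{-aρ} on Ici ρ₂
  have h2aε : 0 < 2 - a - ε := by rw [hε]; linarith
  obtain ⟨ρ₂, hρ₂⟩ : ∃ ρ₂ : ℝ, ρ₂ = max ρ₁ (Real.log (L / (ε * (2 - a - ε))) / a) := ⟨_, rfl⟩
  have hρ₂1 : ρ₁ ≤ ρ₂ := hρ₂ ▸ le_max_left _ _
  have hρ₂0 : (0:ℝ) ≤ ρ₂ := le_trans hρ₁0 hρ₂1
  have hkey₂ : L * Real.exp (-a * ρ₂) ≤ ε * (2 - a - ε) :=
    exp_bound_aux a L (ε * (2 - a - ε)) ha0 hL (by positivity) ρ₂ (hρ₂ ▸ le_max_right _ _)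
  obtain ⟨K, hK⟩ : ∃ K : ℝ, K = ε * Real.exp (a * ρ₂) := ⟨_, rfl⟩
  have hK0 : 0 < K := by rw [hK]; positivity
  have hKe : K * Real.exp (-a * ρ₂) = ε := by
    rw [hK, mul_assoc, ← Real.exp_add]
    simp
  have hlow2 : ∀ t ∈ Ici ρ₂, 1 - K * Real.exp (-a * t) ≤ y t := by
    refine riccati_comparison ρ₂ y (fun t => 1 - K * Real.exp (-a * t))
      (fun t => f t - y t ^ 2) (fun t => -(K * (Real.exp (-a * t) * (-a))))
      (fun t ht => (hy t (le_trans hρ₂0 ht)).mono (Ici_subset_Ici.2 hρ₂0))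
      (fun t _ => ((exp_deriv_aux a K t).const_sub 1).hasDerivWithinAt) ?_ ?_
    · intro t ht
      have ht2 : ρ₂ ≤ t := ht
      have ht0 : (0:ℝ) ≤ t := le_trans hρ₂0 ht2
      have hE0 : 0 < Real.exp (-a * t) := Real.exp_pos _
      have hEmono : Real.exp (-a * t) ≤ Real.exp (-a * ρ₂) := by
        apply Real.exp_le_exp.2
        nlinarith [mul_le_mul_of_nonneg_left ht2 ha0.le]
      have h1 : K * K * Real.exp (-a * t) ≤ K * ε := by
        calc K * K * Real.exp (-a * t) ≤ K * K * Real.exp (-a * ρ₂) := by nlinarith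
          _ = K * (K * Real.exp (-a * ρ₂)) := by ring
          _ = K * ε := by rw [hKe]
      have h2 : L ≤ K * (2 - a - ε) := by
        have h3 := mul_le_mul_of_nonneg_right hkey₂ (Real.exp_pos (a * ρ₂)).le
        have h4 : Real.exp (-a * ρ₂) * Real.exp (a * ρ₂) = 1 := by
          rw [← Real.exp_add]; simp
        calc L = L * (Real.exp (-a * ρ₂) * Real.exp (a * ρ₂)) := by rw [h4]; ring
          _ = L * Real.exp (-a * ρ₂) * Real.exp (a * ρ₂) := by ring
          _ ≤ ε * (2 - a - ε) * Real.exp (a * ρ₂) := h3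
          _ = K * (2 - a - ε) := by rw [hK]; ring
      have h5 := hfl t ht0
      nlinarith [mul_le_mul_of_nonneg_right h2 hE0.le, h1, hE0,
        mul_le_mul_of_nonneg_right h1 hE0.le]
    · rw [hKe]
      exact hpers ρ₂ (mem_Ici.2 hρ₂1)
  -- Final assembly
  refine ⟨max C₁ (Real.exp (a * ρ₂)), lt_max_of_lt_left hC₁0, ?_⟩
  intro ρ hρ
  have hE0 : 0 < Real.exp (-a * ρ) := Real.exp_pos _
  rw [abs_sub_le_iff]
  constructor
  · -- y ρ - 1 ≤ C e^{-aρ}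
    have h1 := hupper ρ hρ
    have h2 : C₁ * Real.exp (-a * ρ) ≤ max C₁ (Real.exp (a * ρ₂)) * Real.exp (-a * ρ) :=
      mul_le_mul_of_nonneg_right (le_max_left _ _) hE0.le
    linarith
  · -- 1 - y ρ ≤ C e^{-aρ}
    have hCmax : Real.exp (a * ρ₂) ≤ max C₁ (Real.exp (a * ρ₂)) := le_max_right _ _
    rcases le_or_gt ρ₂ ρ with hcase | hcase
    · have h1 := hlow2 ρ (mem_Ici.2 hcase)
      have hKle : K ≤ Real.exp (a * ρ₂) := by
        rw [hK]
        nlinarith [Real.exp_pos (a * ρ₂)]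
      have h2 : K * Real.exp (-a * ρ) ≤ max C₁ (Real.exp (a * ρ₂)) * Real.exp (-a * ρ) :=
        mul_le_mul_of_nonneg_right (le_trans hKle hCmax) hE0.le
      linarith
    · have h1 := hlow ρ (mem_Ici.2 hρ)
      have h2 : (1:ℝ) ≤ Real.exp (a * ρ₂) * Real.exp (-a * ρ) := by
        rw [← Real.exp_add]
        apply Real.one_le_exp
        nlinarith
      have h3 : Real.exp (a * ρ₂) * Real.exp (-a * ρ)
          ≤ max C₁ (Real.exp (a * ρ₂)) * Real.exp (-a * ρ) :=
        mul_le_mul_of_nonneg_right hCmax hE0.le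
      linarith
end

section
/- Let a > 0 and L > 0. Suppose f : [0,∞) → ℝ is continuous with f(ρ) ≥ 1/4 for all ρ ≥ 0 and |f(ρ) − 1| ≤ L e^{−aρ} for all ρ ≥ 0. Suppose y : [0,∞) → ℝ is differentiable, satisfies the Riccati equation y′(ρ) + y(ρ)² = f(ρ) for all ρ ≥ 0, and y(0) > 0. Then there exists a positive constant C, depending only on L and y(0), such that 0 < y(ρ) < C for all ρ ≥ 0. -/
open Topology Filter

/-- Barrier lemma: a function on `[0,∞)` with `g 0 < B` that has strictly
negative derivative whenever it touches the level `B` stays below `B`. -/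
lemma barrier_aux (g g' : ℝ → ℝ) (B : ℝ)
    (hg : ∀ ρ, 0 ≤ ρ → HasDerivWithinAt g (g' ρ) (Set.Ici 0) ρ)
    (h0 : g 0 < B)
    (hstop : ∀ ρ, 0 ≤ ρ → g ρ = B → g' ρ < 0) :
    ∀ ρ, 0 ≤ ρ → g ρ < B := by
  by_contra hcon
  push_neg at hcon
  obtain ⟨ρ₀, hρ₀, hBρ₀⟩ := hcon
  set S : Set ℝ := Set.Ici 0 ∩ g ⁻¹' Set.Ici B with hS
  have hScl : IsClosed S := by
    apply ContinuousOn.preimage_isClosed_of_isClosed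
      (fun x hx => (hg x hx).continuousWithinAt) isClosed_Ici isClosed_Ici
  have hSne : S.Nonempty := ⟨ρ₀, hρ₀, hBρ₀⟩
  have hSbdd : BddBelow S := ⟨0, fun x hx => hx.1⟩
  set τ := sInf S with hτ
  have hτS : τ ∈ S := hScl.csInf_mem hSne hSbdd
  have hτ0 : 0 ≤ τ := hτS.1
  have hτpos : 0 < τ := by
    rcases hτ0.lt_or_eq with h | h
    · exact h
    · exact absurd hτS.2 (by rw [← h]; simpa using h0.not_ge)
  have hbelow : ∀ ρ ∈ Set.Ico (0:ℝ) τ, g ρ < B := by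
    intro ρ hρ
    by_contra hge
    push_neg at hge
    exact absurd (csInf_le hSbdd ⟨hρ.1, hge⟩) (not_le.2 hρ.2)
  have hne : (𝓝[Set.Ico (0:ℝ) τ] τ).NeBot := right_nhdsWithin_Ico_neBot hτpos
  -- g τ ≤ B by continuity from the left
  have hgτ_le : g τ ≤ B := by
    have hc : ContinuousWithinAt g (Set.Ico 0 τ) τ :=
      ((hg τ hτ0).continuousWithinAt).mono (fun x hx => hx.1)
    refine le_of_tendsto hc ?_
    filter_upwards [eventually_mem_nhdsWithin] with x hx using (hbelow x hx).le
  have hgτ : g τ = B := le_antisymm hgτ_le hτS.2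
  have hd : g' τ < 0 := hstop τ hτ0 hgτ
  -- but the left slopes are nonnegative
  have hder : HasDerivWithinAt g (g' τ) (Set.Ico 0 τ ∪ {τ}) τ :=
    (hg τ hτ0).mono (by rintro x (hx | rfl); exacts [hx.1, hτ0])
  rw [hasDerivWithinAt_iff_tendsto_slope] at hder
  have hset : (Set.Ico 0 τ ∪ {τ}) \ {τ} = Set.Ico 0 τ \ {τ} := by
    ext x; simp [Set.mem_diff]
  have hne' : (𝓝[(Set.Ico 0 τ ∪ {τ}) \ {τ}] τ).NeBot := by
    rw [hset]
    have : Set.Ico (0:ℝ) τ \ {τ} = Set.Ico 0 τ := by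
      ext x
      simp only [Set.mem_diff, Set.mem_Ico, Set.mem_singleton_iff]
      constructor
      · rintro ⟨h, -⟩; exact h
      · intro h; exact ⟨h, ne_of_lt h.2⟩
    rw [this]; exact hne
  have hnonneg : 0 ≤ g' τ := by
    refine ge_of_tendsto hder ?_
    filter_upwards [eventually_mem_nhdsWithin] with x hx
    rw [hset] at hx
    have hxτ : x < τ := hx.1.2
    have hgx : g x < B := hbelow x hx.1
    rw [slope_comm, slope_def_field, hgτ]
    exact div_nonneg (by linarith) (by linarith)
  linarith

/-- A priori uniform bound (first step of the proof of Lemma 2.1): a solution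
of the Riccati equation `y' + y² = f` with `f ≥ 1/4`, `|f - 1| ≤ L e^{-aρ}`
and `y(0) > 0` satisfies `0 < y < C`. -/
theorem riccati_uniform_bound (a L : ℝ) (ha : 0 < a) (hL : 0 < L)
    (f y : ℝ → ℝ)
    (hf_cont : ContinuousOn f (Set.Ici 0))
    (hf_lb : ∀ ρ, 0 ≤ ρ → (1 : ℝ) / 4 ≤ f ρ)
    (hf_close : ∀ ρ, 0 ≤ ρ → |f ρ - 1| ≤ L * Real.exp (-a * ρ))
    (hy : ∀ ρ, 0 ≤ ρ → HasDerivWithinAt y (f ρ - (y ρ) ^ 2) (Set.Ici 0) ρ)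
    (hy0 : 0 < y 0) :
    ∃ C : ℝ, 0 < C ∧ ∀ ρ, 0 ≤ ρ → 0 < y ρ ∧ y ρ < C := by
  have hf_ub : ∀ ρ, 0 ≤ ρ → f ρ ≤ 1 + L := by
    intro ρ hρ
    have h1 := hf_close ρ hρ
    have h2 : Real.exp (-a * ρ) ≤ 1 := by
      rw [← Real.exp_zero]
      exact Real.exp_le_exp.2 (by nlinarith)
    have := abs_le.1 h1
    nlinarith [hL.le]
  set C : ℝ := max (y 0) (Real.sqrt (1 + L)) + 1 with hC
  have hCpos : 0 < C := by
    have := Real.sqrt_nonneg (1 + L)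
    have := le_max_right (y 0) (Real.sqrt (1 + L))
    positivity
  refine ⟨C, hCpos, ?_⟩
  have hupper : ∀ ρ, 0 ≤ ρ → y ρ < C := by
    apply barrier_aux y (fun ρ => f ρ - (y ρ) ^ 2) C hy
    · have := le_max_left (y 0) (Real.sqrt (1 + L)); linarith
    · intro ρ hρ hyρ
      have hsq : 1 + L < C ^ 2 := by
        have h1 : Real.sqrt (1 + L) + 1 ≤ C := by
          have := le_max_right (y 0) (Real.sqrt (1 + L)); linarith
        have h2 : Real.sqrt (1 + L) ^ 2 = 1 + L :=
          Real.sq_sqrt (by linarith)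
        nlinarith [Real.sqrt_nonneg (1 + L)]
      have := hf_ub ρ hρ
      rw [hyρ]; linarith
  set m : ℝ := min (y 0) (1 / 2) with hm
  have hmpos : 0 < m := lt_min hy0 (by norm_num)
  have hlower : ∀ ρ, 0 ≤ ρ → -(y ρ) < -(m / 2) := by
    apply barrier_aux (fun ρ => -(y ρ)) (fun ρ => -(f ρ - (y ρ) ^ 2)) (-(m / 2))
    · intro ρ hρ; exact (hy ρ hρ).neg
    · show -(y 0) < -(m / 2)
      have := min_le_left (y 0) (1 / 2); linarith
    · intro ρ hρ hyρ
      have hyv : y ρ = m / 2 := by linarith [neg_injective hyρ]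
      have hm2 : m ≤ 1 / 2 := min_le_right _ _
      have := hf_lb ρ hρ
      rw [hyv]; nlinarith
  intro ρ hρ
  exact ⟨by linarith [hlower ρ hρ, hmpos], hupper ρ hρ⟩
end

section
/- Let Λ > 0, c > 0, C > 0 and 0 < β < 2. Suppose y : [0,∞) → ℝ is differentiable, Ω : [0,∞) → ℝ is continuous with |Ω(ρ)| ≤ Λ (1 + ρ) e^{−cρ} for all ρ ≥ 0, h : [0,∞) → ℝ satisfies |h(ρ)| ≤ C e^{−βρ} for all ρ ≥ 0, and y′(ρ) + (2 + Ω(ρ)) y(ρ) = h(ρ) for all ρ ≥ 0. Then there exists a positive constant Λ′, depending only on Λ, c, C, β and |y(0)|, such that |y(ρ)| ≤ Λ′ e^{−βρ} for all ρ ≥ 0. -/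
open Set MeasureTheory

private lemma my_mono_aux (f f' : ℝ → ℝ)
    (hf : ∀ x, 0 ≤ x → HasDerivWithinAt f (f' x) (Set.Ici 0) x)
    (hf' : ∀ x, 0 ≤ x → 0 ≤ f' x) : MonotoneOn f (Set.Ici 0) := by
  apply monotoneOn_of_deriv_nonneg (convex_Ici 0)
  · exact fun x hx => (hf x hx).continuousWithinAt
  · intro x hx
    rw [interior_Ici] at hx
    exact (((hf x hx.le).hasDerivAt (Ici_mem_nhds hx)).differentiableAt).differentiableWithinAt
  · intro x hx
    rw [interior_Ici] at hx
    rw [((hf x hx.le).hasDerivAt (Ici_mem_nhds hx)).deriv]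
    exact hf' x hx.le

private lemma my_le_aux (f g f' g' : ℝ → ℝ)
    (hf : ∀ x, 0 ≤ x → HasDerivWithinAt f (f' x) (Set.Ici 0) x)
    (hg : ∀ x, 0 ≤ x → HasDerivWithinAt g (g' x) (Set.Ici 0) x)
    (h0 : f 0 ≤ g 0) (hle : ∀ x, 0 ≤ x → f' x ≤ g' x) :
    ∀ ρ, 0 ≤ ρ → f ρ ≤ g ρ := by
  intro ρ hρ
  have := my_mono_aux (fun x => g x - f x) (fun x => g' x - f' x)
    (fun x hx => (hg x hx).sub (hf x hx))
    (fun x hx => sub_nonneg.2 (hle x hx)) (self_mem_Ici) hρ hρ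
  simp only at this
  linarith

private lemma my_Q_deriv (Ω : ℝ → ℝ) (hΩ_cont : ContinuousOn Ω (Set.Ici 0)) :
    ∀ ρ, 0 ≤ ρ → HasDerivWithinAt (fun u => ∫ t in (0:ℝ)..u, Ω t) (Ω ρ) (Set.Ici 0) ρ := by
  intro ρ hρ
  have hint : IntervalIntegrable Ω MeasureTheory.volume 0 ρ := by
    apply ContinuousOn.intervalIntegrable
    apply hΩ_cont.mono
    rw [Set.uIcc_of_le hρ]
    exact Set.Icc_subset_Ici_self
  rcases eq_or_lt_of_le hρ with rfl | hρ'
  · have hmeas : StronglyMeasurableAtFilter Ω (nhdsWithin 0 (Set.Ioi 0)) :=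
      ⟨Set.Ici 0, Filter.mem_of_superset self_mem_nhdsWithin Set.Ioi_subset_Ici_self,
        hΩ_cont.aestronglyMeasurable measurableSet_Ici⟩
    exact intervalIntegral.integral_hasDerivWithinAt_right hint hmeas
      ((hΩ_cont 0 Set.self_mem_Ici).mono Set.Ioi_subset_Ici_self)
  · have hnhds : Set.Ici (0:ℝ) ∈ nhds ρ := Ici_mem_nhds hρ'
    have hmeas : StronglyMeasurableAtFilter Ω (nhds ρ) :=
      ⟨Set.Ici 0, hnhds, hΩ_cont.aestronglyMeasurable measurableSet_Ici⟩
    have hca : ContinuousAt Ω ρ := (hΩ_cont ρ hρ).continuousAt hnhds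
    exact (intervalIntegral.integral_hasDerivAt_right hint hmeas hca).hasDerivWithinAt

/-- Perturbed linear ODE estimate (from the proof of Proposition 2.2): if
`y' + (2 + Ω) y = h` with `|Ω(ρ)| ≤ Λ (1 + ρ) e^{-cρ}` and `|h(ρ)| ≤ C e^{-βρ}`
for some `0 < β < 2`, then `|y(ρ)| ≤ Λ' e^{-βρ}`. -/
theorem perturbed_linear_ode_decay (Λ c C β : ℝ)
    (hΛ : 0 < Λ) (hc : 0 < c) (hC : 0 < C) (hβ0 : 0 < β) (hβ2 : β < 2)
    (y Ω h : ℝ → ℝ)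
    (hΩ_cont : ContinuousOn Ω (Set.Ici 0))
    (hΩ : ∀ ρ, 0 ≤ ρ → |Ω ρ| ≤ Λ * (1 + ρ) * Real.exp (-c * ρ))
    (hh : ∀ ρ, 0 ≤ ρ → |h ρ| ≤ C * Real.exp (-β * ρ))
    (hy : ∀ ρ, 0 ≤ ρ → HasDerivWithinAt y (h ρ - (2 + Ω ρ) * y ρ) (Set.Ici 0) ρ) :
    ∃ Λ' : ℝ, 0 < Λ' ∧ ∀ ρ, 0 ≤ ρ → |y ρ| ≤ Λ' * Real.exp (-β * ρ) := by
  set M : ℝ := (2/c) * (1 + 2/c) * Λ with hMdef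
  have hM : 0 < M := by positivity
  set Q : ℝ → ℝ := fun u => ∫ t in (0:ℝ)..u, Ω t with hQdef
  have hQd : ∀ ρ, 0 ≤ ρ → HasDerivWithinAt Q (Ω ρ) (Set.Ici 0) ρ := my_Q_deriv Ω hΩ_cont
  have hQ0 : Q 0 = 0 := intervalIntegral.integral_same
  -- key pointwise bound on Ω
  have hkey : ∀ ρ : ℝ, 0 ≤ ρ → Λ * (1 + ρ) * Real.exp (-c * ρ) ≤
      M * (c/2 * Real.exp (-(c/2) * ρ)) := by
    intro ρ hρ
    have hE : Real.exp (-c * ρ) = Real.exp (-(c/2) * ρ) * Real.exp (-(c/2) * ρ) := by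
      rw [← Real.exp_add]; ring_nf
    have hE1 : Real.exp (-(c/2) * ρ) ≤ 1 := Real.exp_le_one_iff.2 (by nlinarith)
    have hE0 : 0 < Real.exp (-(c/2) * ρ) := Real.exp_pos _
    have h1 : (c/2) * ρ + 1 ≤ Real.exp ((c/2) * ρ) := Real.add_one_le_exp _
    have h2 : Real.exp ((c/2) * ρ) * Real.exp (-(c/2) * ρ) = 1 := by
      rw [← Real.exp_add]; ring_nf; exact Real.exp_zero
    -- ρ * exp(-(c/2)ρ) ≤ 2/c
    have h3' : ((c/2) * ρ + 1) * Real.exp (-(c/2) * ρ) ≤ 1 := by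
      calc ((c/2) * ρ + 1) * Real.exp (-(c/2) * ρ)
          ≤ Real.exp ((c/2) * ρ) * Real.exp (-(c/2) * ρ) :=
            mul_le_mul_of_nonneg_right h1 hE0.le
        _ = 1 := h2
    have h3 : ρ * Real.exp (-(c/2) * ρ) ≤ 2/c := by
      rw [le_div_iff₀ hc]
      nlinarith [hE0.le]
    have h4 : (1 + ρ) * Real.exp (-(c/2) * ρ) ≤ 1 + 2/c := by nlinarith
    have hMc : M * (c/2) = (1 + 2/c) * Λ := by rw [hMdef]; field_simp
    calc Λ * (1 + ρ) * Real.exp (-c * ρ)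
        = (Λ * ((1 + ρ) * Real.exp (-(c/2) * ρ))) * Real.exp (-(c/2) * ρ) := by
          rw [hE]; ring
      _ ≤ (Λ * (1 + 2/c)) * Real.exp (-(c/2) * ρ) := by
          apply mul_le_mul_of_nonneg_right _ hE0.le
          exact mul_le_mul_of_nonneg_left h4 hΛ.le
      _ = M * (c/2 * Real.exp (-(c/2) * ρ)) := by rw [← mul_assoc, hMc]; ring
  -- comparison function for Q
  set ψ : ℝ → ℝ := fun ρ => M * (1 - Real.exp (-(c/2) * ρ)) with hψdef
  have hψd : ∀ ρ : ℝ, HasDerivAt ψ (M * (c/2 * Real.exp (-(c/2) * ρ))) ρ := by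
    intro ρ
    have h1 : HasDerivAt (fun ρ : ℝ => -(c/2) * ρ) (-(c/2)) ρ := by
      simpa using (hasDerivAt_id ρ).const_mul (-(c/2))
    have h2 := (Real.hasDerivAt_exp (-(c/2) * ρ)).comp ρ h1
    have h3 := ((hasDerivAt_const ρ (1:ℝ)).sub h2).const_mul M
    convert h3 using 1
    · rfl
    · rfl
    · rfl
    · ring
  have hψle : ∀ ρ : ℝ, ψ ρ ≤ M := by
    intro ρ
    have := (Real.exp_pos (-(c/2) * ρ)).le
    simp only [hψdef]
    nlinarith
  have hψ0 : ψ 0 = 0 := by simp [hψdef]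
  have hQub : ∀ ρ, 0 ≤ ρ → Q ρ ≤ ψ ρ := by
    apply my_le_aux Q ψ Ω (fun ρ => M * (c/2 * Real.exp (-(c/2) * ρ))) hQd
      (fun x _ => (hψd x).hasDerivWithinAt)
    · rw [hQ0, hψ0]
    · intro x hx
      exact le_trans (le_abs_self _) (le_trans (hΩ x hx) (hkey x hx))
  have hQlb : ∀ ρ, 0 ≤ ρ → -Q ρ ≤ ψ ρ := by
    apply my_le_aux (fun u => -Q u) ψ (fun u => -Ω u)
      (fun ρ => M * (c/2 * Real.exp (-(c/2) * ρ)))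
      (fun x hx => (hQd x hx).neg) (fun x _ => (hψd x).hasDerivWithinAt)
    · rw [hψ0]; simp [hQ0]
    · intro x hx
      exact le_trans (neg_le_abs _) (le_trans (hΩ x hx) (hkey x hx))
  have hQM : ∀ ρ, 0 ≤ ρ → |Q ρ| ≤ M := by
    intro ρ hρ
    rw [abs_le]
    constructor
    · linarith [hQlb ρ hρ, hψle ρ]
    · linarith [hQub ρ hρ, hψle ρ]
  -- transformed function w
  set w : ℝ → ℝ := fun ρ => y ρ * Real.exp (2 * ρ + Q ρ) with hwdef
  have hwd : ∀ ρ, 0 ≤ ρ → HasDerivWithinAt w (h ρ * Real.exp (2 * ρ + Q ρ)) (Set.Ici 0) ρ := by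
    intro ρ hρ
    have hinner : HasDerivWithinAt (fun u => 2 * u + Q u) (2 + Ω ρ) (Set.Ici 0) ρ := by
      have := (((hasDerivAt_id ρ).const_mul 2).hasDerivWithinAt).add (hQd ρ hρ)
      convert this using 1
      · rfl
      · rfl
      · rfl
      · ring
    have hEd : HasDerivWithinAt (fun u => Real.exp (2 * u + Q u))
        ((2 + Ω ρ) * Real.exp (2 * ρ + Q ρ)) (Set.Ici 0) ρ := by
      have := (Real.hasDerivAt_exp (2 * ρ + Q ρ)).comp_hasDerivWithinAt ρ hinner
      convert this using 1
      · rfl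
      · rfl
      · rfl
      · ring
    have := (hy ρ hρ).mul hEd
    convert this using 1
    · rfl
    · rfl
    · rfl
    · ring
  set a : ℝ := 2 - β with hadef
  have ha : 0 < a := by simp [hadef]; linarith
  set K : ℝ := C * Real.exp M with hKdef
  have hK : 0 < K := by positivity
  set φ : ℝ → ℝ := fun ρ => |y 0| + K/a * (Real.exp (a * ρ) - 1) with hφdef
  have hφd : ∀ ρ : ℝ, HasDerivAt φ (K * Real.exp (a * ρ)) ρ := by
    intro ρ
    have h1 : HasDerivAt (fun ρ : ℝ => a * ρ) a ρ := by
      simpa using (hasDerivAt_id ρ).const_mul a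
    have h2 := (Real.hasDerivAt_exp (a * ρ)).comp ρ h1
    have h3 := (((h2.sub_const 1).const_mul (K/a)).const_add (|y 0|))
    convert h3 using 1
    · rfl
    · rfl
    · rfl
    · field_simp [ha.ne']
  -- bound on the derivative of w
  have hwb : ∀ ρ, 0 ≤ ρ → |h ρ * Real.exp (2 * ρ + Q ρ)| ≤ K * Real.exp (a * ρ) := by
    intro ρ hρ
    rw [abs_mul, Real.abs_exp]
    have h1 : Real.exp (2 * ρ + Q ρ) ≤ Real.exp (2 * ρ + M) :=
      Real.exp_le_exp.2 (by linarith [(abs_le.1 (hQM ρ hρ)).2])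
    have h2 : Real.exp (-β * ρ) * Real.exp (2 * ρ + M) = Real.exp M * Real.exp (a * ρ) := by
      rw [← Real.exp_add, ← Real.exp_add]; congr 1; simp [hadef]; ring
    calc |h ρ| * Real.exp (2 * ρ + Q ρ)
        ≤ (C * Real.exp (-β * ρ)) * Real.exp (2 * ρ + M) := by
          apply mul_le_mul (hh ρ hρ) h1 (Real.exp_pos _).le
          positivity
      _ = K * Real.exp (a * ρ) := by rw [hKdef, mul_assoc, h2]; ring
  have hw0 : w 0 = y 0 := by simp [hwdef, hQ0]
  have hφ0 : φ 0 = |y 0| := by simp [hφdef]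
  have hwub : ∀ ρ, 0 ≤ ρ → w ρ ≤ φ ρ := by
    apply my_le_aux w φ (fun ρ => h ρ * Real.exp (2 * ρ + Q ρ))
      (fun ρ => K * Real.exp (a * ρ)) hwd (fun x _ => (hφd x).hasDerivWithinAt)
    · rw [hw0, hφ0]; exact le_abs_self _
    · intro x hx; exact le_trans (le_abs_self _) (hwb x hx)
  have hwlb : ∀ ρ, 0 ≤ ρ → -w ρ ≤ φ ρ := by
    apply my_le_aux (fun u => -w u) φ (fun ρ => -(h ρ * Real.exp (2 * ρ + Q ρ)))
      (fun ρ => K * Real.exp (a * ρ)) (fun x hx => (hwd x hx).neg)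
      (fun x _ => (hφd x).hasDerivWithinAt)
    · show -w 0 ≤ φ 0
      rw [hw0, hφ0]; exact neg_le_abs _
    · intro x hx; exact le_trans (neg_le_abs _) (hwb x hx)
  -- conclusion
  refine ⟨(|y 0| + K/a) * Real.exp M, by positivity, ?_⟩
  intro ρ hρ
  have hwabs : |w ρ| ≤ |y 0| + K/a * Real.exp (a * ρ) := by
    have := abs_le.2 ⟨by linarith [hwlb ρ hρ], hwub ρ hρ⟩
    have hKa : 0 < K/a := by positivity
    simp only [hφdef] at this
    nlinarith [this]
  have hyw : |y ρ| = |w ρ| * Real.exp (-(2 * ρ + Q ρ)) := by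
    have : y ρ = w ρ * Real.exp (-(2 * ρ + Q ρ)) := by
      simp only [hwdef]
      rw [mul_assoc, ← Real.exp_add, add_neg_cancel, Real.exp_zero, mul_one]
    rw [this, abs_mul, Real.abs_exp]
  rw [hyw]
  have hexp1 : Real.exp (-(2 * ρ + Q ρ)) ≤ Real.exp (M - 2 * ρ) :=
    Real.exp_le_exp.2 (by linarith [(abs_le.1 (hQM ρ hρ)).1])
  have e1 : Real.exp (a * ρ) * Real.exp (M - 2 * ρ) = Real.exp M * Real.exp (-β * ρ) := by
    rw [← Real.exp_add, ← Real.exp_add]; congr 1; simp [hadef]; ring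
  have e2 : Real.exp (M - 2 * ρ) ≤ Real.exp M * Real.exp (-β * ρ) := by
    rw [← Real.exp_add]; exact Real.exp_le_exp.2 (by nlinarith)
  have hKa : 0 < K/a := by positivity
  have hy0 : (0:ℝ) ≤ |y 0| := abs_nonneg _
  calc |w ρ| * Real.exp (-(2 * ρ + Q ρ))
      ≤ (|y 0| + K/a * Real.exp (a * ρ)) * Real.exp (M - 2 * ρ) := by
        apply mul_le_mul hwabs hexp1 (Real.exp_pos _).le
        positivity
    _ ≤ (|y 0| + K/a) * Real.exp M * Real.exp (-β * ρ) := by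
        nlinarith [Real.exp_pos (a * ρ), Real.exp_pos (M - 2*ρ), Real.exp_pos (-β*ρ),
          Real.exp_pos M, mul_le_mul_of_nonneg_left e2 hy0, e1]
    _ = (|y 0| + K/a) * Real.exp M * Real.exp (-β * ρ) := rfl
end

section
/- Let t₀ ≥ 0 and Λ > 0. Suppose φ : [t₀, ∞) → ℝ is differentiable with |φ(t)| ≤ 1 for all t ≥ t₀ and φ(t₀) > −1, and suppose q : [t₀, ∞) → ℝ is continuous with |q(t) − 1| ≤ Λ e^{−2t} for all t ≥ t₀ and φ′(t) = (1 − φ(t)²) q(t) for all t ≥ t₀. Then there exists a positive constant C, depending only on Λ, t₀ and φ(t₀), such that 0 ≤ 1 − φ(t) ≤ C e^{−2t} for all t ≥ t₀. -/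
open Set

private lemma monoOn_of_hasDerivWithin {s : Set ℝ} (hs : Convex ℝ s) {F F' : ℝ → ℝ}
    (hd : ∀ t ∈ s, HasDerivWithinAt F (F' t) s t)
    (h0 : ∀ t ∈ interior s, 0 ≤ F' t) : MonotoneOn F s := by
  apply monotoneOn_of_deriv_nonneg hs (fun t ht => (hd t ht).continuousWithinAt)
  · intro x hx
    exact (((hd x (interior_subset hx)).hasDerivAt
      (mem_interior_iff_mem_nhds.mp hx)).differentiableAt).differentiableWithinAt
  · intro x hx
    rw [((hd x (interior_subset hx)).hasDerivAt (mem_interior_iff_mem_nhds.mp hx)).deriv]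
    exact h0 x hx

private lemma antiOn_of_hasDerivWithin {s : Set ℝ} (hs : Convex ℝ s) {F F' : ℝ → ℝ}
    (hd : ∀ t ∈ s, HasDerivWithinAt F (F' t) s t)
    (h0 : ∀ t ∈ interior s, F' t ≤ 0) : AntitoneOn F s := by
  apply antitoneOn_of_deriv_nonpos hs (fun t ht => (hd t ht).continuousWithinAt)
  · intro x hx
    exact (((hd x (interior_subset hx)).hasDerivAt
      (mem_interior_iff_mem_nhds.mp hx)).differentiableAt).differentiableWithinAt
  · intro x hx
    rw [((hd x (interior_subset hx)).hasDerivAt (mem_interior_iff_mem_nhds.mp hx)).deriv]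
    exact h0 x hx

set_option maxHeartbeats 1000000 in
/-- Riccati-type ODE estimate from the proof of Lemma 5.4: if `|φ| ≤ 1`,
`φ(t₀) > -1` and `φ' = (1 - φ²) q` with `|q - 1| ≤ Λ e^{-2t}`, then
`0 ≤ 1 - φ(t) ≤ C e^{-2t}`. -/
theorem phi_convergence (t₀ Λ : ℝ) (ht₀ : 0 ≤ t₀) (hΛ : 0 < Λ)
    (φ q : ℝ → ℝ)
    (hφ_bd : ∀ t, t₀ ≤ t → |φ t| ≤ 1)
    (hφ0 : -1 < φ t₀)
    (hq_cont : ContinuousOn q (Set.Ici t₀))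
    (hq : ∀ t, t₀ ≤ t → |q t - 1| ≤ Λ * Real.exp (-2 * t))
    (hφ : ∀ t, t₀ ≤ t → HasDerivWithinAt φ ((1 - (φ t) ^ 2) * q t) (Set.Ici t₀) t) :
    ∃ C : ℝ, 0 < C ∧ ∀ t, t₀ ≤ t → 0 ≤ 1 - φ t ∧ 1 - φ t ≤ C * Real.exp (-2 * t) := by
  -- basic bounds
  have hφle : ∀ t, t₀ ≤ t → -1 ≤ φ t ∧ φ t ≤ 1 := fun t ht => abs_le.mp (hφ_bd t ht)
  have hexple : ∀ t, t₀ ≤ t → Real.exp (-2 * t) ≤ 1 := by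
    intro t ht
    rw [Real.exp_le_one_iff]
    nlinarith
  have hql : ∀ t, t₀ ≤ t → 1 - Λ * Real.exp (-2 * t) ≤ q t := by
    intro t ht
    have := abs_le.mp (hq t ht)
    linarith [this.1]
  have hqu : ∀ t, t₀ ≤ t → q t ≤ 1 + Λ := by
    intro t ht
    have h1 := (abs_le.mp (hq t ht)).2
    have h2 := hexple t ht
    nlinarith [Real.exp_pos (-2 * t)]
  have hql' : ∀ t, t₀ ≤ t → 1 - Λ ≤ q t := by
    intro t ht
    have h1 := hql t ht
    have h2 := hexple t ht
    nlinarith [Real.exp_pos (-2 * t)]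
  -- Step A : 1 + φ t > 0 for all t ≥ t₀
  have hApos : ∀ t, t₀ ≤ t → 0 < 1 + φ t := by
    have hA : MonotoneOn (fun t => (1 + φ t) * Real.exp (2 * (1 + Λ) * (t - t₀)))
        (Ici t₀) := by
      apply monoOn_of_hasDerivWithin (convex_Ici t₀)
        (F' := fun t => ((1 - (φ t) ^ 2) * q t) * Real.exp (2 * (1 + Λ) * (t - t₀))
          + (1 + φ t) * (Real.exp (2 * (1 + Λ) * (t - t₀)) * (2 * (1 + Λ))))
      · intro t ht
        have h1 : HasDerivWithinAt (fun t => 1 + φ t) ((1 - (φ t) ^ 2) * q t) (Ici t₀) t :=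
          (hφ t ht).const_add 1
        have hin : HasDerivAt (fun t : ℝ => 2 * (1 + Λ) * (t - t₀)) (2 * (1 + Λ)) t := by
          simpa using ((hasDerivAt_id t).sub_const t₀).const_mul (2 * (1 + Λ))
        exact h1.mul hin.exp.hasDerivWithinAt
      · intro t ht
        rw [interior_Ici] at ht
        have ht' : t₀ ≤ t := le_of_lt ht
        have hb := hφle t ht'
        have hqt := hql' t ht'
        have hE := Real.exp_pos (2 * (1 + Λ) * (t - t₀))
        have inner : 0 ≤ (1 - (φ t) ^ 2) * q t + (1 + φ t) * (2 * (1 + Λ)) := by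
          nlinarith [mul_nonneg (mul_nonneg (by linarith : (0:ℝ) ≤ 1 + φ t)
              (by linarith : (0:ℝ) ≤ 1 - φ t)) (by linarith : (0:ℝ) ≤ q t + 1 + Λ),
            mul_nonneg (mul_nonneg (by linarith : (0:ℝ) ≤ 1 + φ t)
              (by linarith : (0:ℝ) ≤ 1 + φ t)) (by linarith : (0:ℝ) ≤ 1 + Λ)]
        nlinarith [mul_nonneg inner hE.le]
    intro t ht
    have h1 := hA (self_mem_Ici) (mem_Ici.mpr ht) ht
    simp only at h1
    have h2 : (0:ℝ) < (1 + φ t₀) * Real.exp (2 * (1 + Λ) * (t₀ - t₀)) :=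
      mul_pos (by linarith) (Real.exp_pos _)
    have hE := Real.exp_pos (2 * (1 + Λ) * (t - t₀))
    nlinarith [h1, h2, hE]
  -- Step B : for t ≥ T₁, q t ≥ 1/2 and φ is monotone
  obtain ⟨T₁, hT₁def⟩ : ∃ T₁ : ℝ, T₁ = max t₀ (Real.log (2 * Λ) / 2) := ⟨_, rfl⟩
  have hT₁ : t₀ ≤ T₁ := by rw [hT₁def]; exact le_max_left _ _
  have hqhalf : ∀ t, T₁ ≤ t → 1 / 2 ≤ q t := by
    intro t ht
    have ht' : t₀ ≤ t := le_trans hT₁ ht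
    have hlog : Real.log (2 * Λ) / 2 ≤ t := by
      rw [hT₁def] at ht; exact le_trans (le_max_right _ _) ht
    have h1 : Real.exp (-2 * t) ≤ Real.exp (-Real.log (2 * Λ)) := by
      apply Real.exp_le_exp.mpr; linarith
    have h2 : Real.exp (-Real.log (2 * Λ)) = (2 * Λ)⁻¹ := by
      rw [Real.exp_neg, Real.exp_log (by positivity)]
    rw [h2] at h1
    have h3 := mul_le_mul_of_nonneg_left h1 hΛ.le
    have h4 : (2 * Λ) * (2 * Λ)⁻¹ = 1 := mul_inv_cancel₀ (by positivity)
    have h5 := hql t ht'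
    linarith
  have hmono : MonotoneOn φ (Ici T₁) := by
    apply monoOn_of_hasDerivWithin (convex_Ici T₁) (F' := fun t => (1 - (φ t) ^ 2) * q t)
    · intro t ht
      exact (hφ t (le_trans hT₁ ht)).mono (Ici_subset_Ici.mpr hT₁)
    · intro t ht
      rw [interior_Ici] at ht
      have ht' : T₁ ≤ t := le_of_lt ht
      have hb := hφle t (le_trans hT₁ ht')
      have hqt := hqhalf t ht'
      have := mul_nonneg (mul_nonneg (by linarith : (0:ℝ) ≤ 1 + φ t)
        (by linarith : (0:ℝ) ≤ 1 - φ t)) (by linarith : (0:ℝ) ≤ q t)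
      nlinarith [this]
  -- Step C : there is T ≥ T₁ with φ T ≥ 0
  have hχ₁ : 0 < 1 + φ T₁ := hApos T₁ hT₁
  obtain ⟨T, hTdef⟩ : ∃ T : ℝ, T = T₁ + 4 / (1 + φ T₁) := ⟨_, rfl⟩
  have hTT₁ : T₁ ≤ T := by
    rw [hTdef]
    have : 0 < 4 / (1 + φ T₁) := by positivity
    linarith
  have htT : t₀ ≤ T := le_trans hT₁ hTT₁
  have hφT : 0 ≤ φ T := by
    by_contra h
    push_neg at h
    have hG : MonotoneOn (fun t => φ t - ((1 + φ T₁) / 4) * t) (Icc T₁ T) := by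
      apply monoOn_of_hasDerivWithin (convex_Icc T₁ T)
        (F' := fun t => (1 - (φ t) ^ 2) * q t - (1 + φ T₁) / 4)
      · intro t ht
        have hsub : Icc T₁ T ⊆ Ici t₀ := fun x hx => le_trans hT₁ hx.1
        have h1 := (hφ t (le_trans hT₁ ht.1)).mono hsub
        have h2 : HasDerivAt (fun t : ℝ => ((1 + φ T₁) / 4) * t) ((1 + φ T₁) / 4) t := by
          simpa using (hasDerivAt_id t).const_mul ((1 + φ T₁) / 4)
        exact h1.sub h2.hasDerivWithinAt
      · intro t ht
        rw [interior_Icc] at ht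
        have ht1 : T₁ ≤ t := ht.1.le
        have ht2 : t ≤ T := ht.2.le
        have hb := hφle t (le_trans hT₁ ht1)
        have hqt := hqhalf t ht1
        have hup : φ t ≤ φ T := hmono (mem_Ici.mpr ht1) (mem_Ici.mpr hTT₁) ht2
        have hlo : φ T₁ ≤ φ t := hmono (mem_Ici.mpr le_rfl) (mem_Ici.mpr ht1) ht1
        have h1 : (1:ℝ) ≤ 1 - φ t := by linarith
        have h2 : 1 + φ T₁ ≤ 1 + φ t := by linarith
        have hfac : 1 + φ T₁ ≤ (1 - φ t) * (1 + φ t) := by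
          nlinarith [mul_le_mul h1 h2 hχ₁.le (by linarith : (0:ℝ) ≤ 1 - φ t)]
        have h4 : (1 + φ T₁) * (1 / 2) ≤ ((1 - φ t) * (1 + φ t)) * q t := by
          apply mul_le_mul hfac hqt (by norm_num)
          linarith
        nlinarith [h4, hχ₁]
    have key := hG (left_mem_Icc.mpr hTT₁) (right_mem_Icc.mpr hTT₁) hTT₁
    simp only at key
    have hsub : T - T₁ = 4 / (1 + φ T₁) := by rw [hTdef]; ring
    have hcT : ((1 + φ T₁) / 4) * (T - T₁) = 1 := by
      rw [hsub]; field_simp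
    have hb := hφle T₁ hT₁
    linarith [key, hcT, hb.1]
  have hφge : ∀ t, T ≤ t → 0 ≤ φ t := by
    intro t ht
    exact le_trans hφT (hmono (mem_Ici.mpr hTT₁) (mem_Ici.mpr (le_trans hTT₁ ht)) ht)
  -- Step D : crude exponential decay of 1 - φ for t ≥ T
  have hD : ∀ t, T ≤ t → 1 - φ t ≤ 2 * Real.exp (-((t - T) / 2)) := by
    have hF₂ : AntitoneOn (fun t => (1 - φ t) * Real.exp ((t - T) / 2)) (Ici T) := by
      apply antiOn_of_hasDerivWithin (convex_Ici T)
        (F' := fun t => (-((1 - (φ t) ^ 2) * q t)) * Real.exp ((t - T) / 2)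
          + (1 - φ t) * (Real.exp ((t - T) / 2) * (2:ℝ)⁻¹))
      · intro t ht
        have ht' : t₀ ≤ t := le_trans htT ht
        have h1 : HasDerivWithinAt (fun t => 1 - φ t) (-((1 - (φ t) ^ 2) * q t)) (Ici T) t :=
          ((hφ t ht').mono (Ici_subset_Ici.mpr htT)).const_sub 1
        have hin : HasDerivAt (fun t : ℝ => (t - T) / 2) (2:ℝ)⁻¹ t := by
          simpa using ((hasDerivAt_id t).sub_const T).div_const 2
        exact h1.mul hin.exp.hasDerivWithinAt
      · intro t ht
        rw [interior_Ici] at ht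
        have ht' : T ≤ t := ht.le
        have ht'' : t₀ ≤ t := le_trans htT ht'
        have hb := hφle t ht''
        have hqt := hqhalf t (le_trans hTT₁ ht')
        have hp := hφge t ht'
        have hE := Real.exp_pos ((t - T) / 2)
        have h4 : (1:ℝ) * (1 / 2) ≤ (1 + φ t) * q t :=
          mul_le_mul (by linarith) hqt (by norm_num) (by linarith)
        have inner : (-((1 - (φ t) ^ 2) * q t)) + (1 - φ t) * (2:ℝ)⁻¹ ≤ 0 := by
          nlinarith [mul_le_mul_of_nonneg_left h4 (by linarith : (0:ℝ) ≤ 1 - φ t)]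
        nlinarith [mul_nonpos_of_nonpos_of_nonneg inner hE.le]
    intro t ht
    have h1 := hF₂ (self_mem_Ici) (mem_Ici.mpr ht) ht
    simp only at h1
    have hTT : Real.exp ((T - T) / 2) = 1 := by norm_num
    rw [hTT, mul_one] at h1
    have hb := hφle T htT
    have h2 : (1 - φ t) * Real.exp ((t - T) / 2) ≤ 2 := by linarith
    have key : Real.exp ((t - T) / 2) * Real.exp (-((t - T) / 2)) = 1 := by
      rw [← Real.exp_add]; norm_num
    have h3 := mul_le_mul_of_nonneg_right h2 (Real.exp_pos (-((t - T) / 2))).le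
    have h4 : (1 - φ t) * (Real.exp ((t - T) / 2) * Real.exp (-((t - T) / 2))) = 1 - φ t := by
      rw [key, mul_one]
    nlinarith [h3, h4]
  -- Step E : sharp decay via an integrating factor
  obtain ⟨B, hBdef⟩ : ∃ B : ℝ → ℝ, B = fun t => 2 * t + Λ * Real.exp (-2 * t)
      + 4 * (1 + Λ) * Real.exp (-((t - T) / 2)) := ⟨_, rfl⟩
  obtain ⟨B', hB'def⟩ : ∃ B' : ℝ → ℝ, B' = fun t => 2 - 2 * Λ * Real.exp (-2 * t)
      - 2 * (1 + Λ) * Real.exp (-((t - T) / 2)) := ⟨_, rfl⟩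
  have hBderiv : ∀ t : ℝ, HasDerivAt B (B' t) t := by
    intro t
    rw [hBdef]
    simp only [hB'def]
    have i1 : HasDerivAt (fun t : ℝ => -2 * t) (-2) t := by
      simpa using (hasDerivAt_id t).const_mul (-2:ℝ)
    have e0 : HasDerivAt (fun t : ℝ => 2 * t) 2 t := by
      simpa using (hasDerivAt_id t).const_mul (2:ℝ)
    have e1 : HasDerivAt (fun t : ℝ => Λ * Real.exp (-2 * t))
        (Λ * (Real.exp (-2 * t) * (-2))) t := (i1.exp).const_mul Λ
    have i2 : HasDerivAt (fun t : ℝ => -((t - T) / 2)) (-(2:ℝ)⁻¹) t := by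
      simpa using (((hasDerivAt_id t).sub_const T).div_const 2).fun_neg
    have e2 : HasDerivAt (fun t : ℝ => 4 * (1 + Λ) * Real.exp (-((t - T) / 2)))
        (4 * (1 + Λ) * (Real.exp (-((t - T) / 2)) * (-(2:ℝ)⁻¹))) t := (i2.exp).const_mul _
    have := (e0.fun_add e1).fun_add e2
    refine this.congr_deriv ?_
    ring
  have hF₃ : AntitoneOn (fun t => (1 - φ t) * Real.exp (B t)) (Ici T) := by
    apply antiOn_of_hasDerivWithin (convex_Ici T)
      (F' := fun t => (-((1 - (φ t) ^ 2) * q t)) * Real.exp (B t)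
        + (1 - φ t) * (Real.exp (B t) * B' t))
    · intro t ht
      have ht' : t₀ ≤ t := le_trans htT ht
      have h1 : HasDerivWithinAt (fun t => 1 - φ t) (-((1 - (φ t) ^ 2) * q t)) (Ici T) t :=
        ((hφ t ht').mono (Ici_subset_Ici.mpr htT)).const_sub 1
      exact h1.mul ((hBderiv t).exp).hasDerivWithinAt
    · intro t ht
      rw [interior_Ici] at ht
      have ht' : T ≤ t := ht.le
      have ht'' : t₀ ≤ t := le_trans htT ht'
      have hb := hφle t ht''
      have hqlo := hql t ht''
      have hqup := hqu t ht''
      have hqt := hqhalf t (le_trans hTT₁ ht')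
      have hp := hφge t ht'
      have hDt := hD t ht'
      have hE := Real.exp_pos (B t)
      have key : B' t ≤ (1 + φ t) * q t := by
        simp only [hB'def]
        have h1 : (1 - φ t) * q t ≤ (1 - φ t) * (1 + Λ) :=
          mul_le_mul_of_nonneg_left hqup (by linarith)
        have h1' : (1 - φ t) * (1 + Λ) ≤ (2 * Real.exp (-((t - T) / 2))) * (1 + Λ) :=
          mul_le_mul_of_nonneg_right hDt (by linarith)
        linarith
      have inner : (-((1 - (φ t) ^ 2) * q t)) + (1 - φ t) * B' t ≤ 0 := by
        have := mul_le_mul_of_nonneg_left key (by linarith : (0:ℝ) ≤ 1 - φ t)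
        nlinarith [this]
      nlinarith [mul_nonpos_of_nonpos_of_nonneg inner hE.le]
  -- assemble the constant
  refine ⟨2 * Real.exp (B T) + 2 * Real.exp (2 * T), by positivity, ?_⟩
  intro t ht
  have hb := hφle t ht
  constructor
  · linarith [hb.2]
  · have hEt := Real.exp_pos (-2 * t)
    rcases le_or_gt T t with hc | hc
    · -- t ≥ T : use hF₃
      have h1 := hF₃ (self_mem_Ici) (mem_Ici.mpr hc) hc
      simp only at h1
      have hbT := hφle T htT
      have h2' := mul_le_mul_of_nonneg_right (by linarith [hbT.1] : 1 - φ T ≤ 2)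
        (Real.exp_pos (B T)).le
      have h2 : (1 - φ t) * Real.exp (B t) ≤ 2 * Real.exp (B T) := by linarith
      have hA0 : 2 * t ≤ B t := by
        rw [hBdef]
        simp only
        nlinarith [mul_pos hΛ (Real.exp_pos (-2 * t)),
          mul_pos (by positivity : (0:ℝ) < 4 * (1 + Λ)) (Real.exp_pos (-((t - T) / 2)))]
      have h3 : Real.exp (2 * t) ≤ Real.exp (B t) := Real.exp_le_exp.mpr hA0
      have h4 : (1 - φ t) * Real.exp (2 * t) ≤ 2 * Real.exp (B T) := by
        have := mul_le_mul_of_nonneg_left h3 (by linarith [hb.2] : (0:ℝ) ≤ 1 - φ t)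
        linarith
      have key : Real.exp (2 * t) * Real.exp (-2 * t) = 1 := by
        rw [← Real.exp_add]; norm_num
      have h5 := mul_le_mul_of_nonneg_right h4 hEt.le
      have h6 : (1 - φ t) * (Real.exp (2 * t) * Real.exp (-2 * t)) = 1 - φ t := by
        rw [key, mul_one]
      nlinarith [h5, h6, mul_pos (Real.exp_pos (2 * T)) hEt]
    · -- t < T : trivial bound
      have h1 : 1 - φ t ≤ 2 := by linarith [hb.1]
      have h2 : Real.exp (2 * T) * Real.exp (-2 * t) = Real.exp (2 * T - 2 * t) := by
        rw [← Real.exp_add]; ring_nf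
      have h3 : (1:ℝ) ≤ Real.exp (2 * T - 2 * t) := by
        apply Real.one_le_exp; linarith
      nlinarith [h1, h2, h3, mul_pos (Real.exp_pos (B T)) hEt]
end
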